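/- arXiv:1001.1748 — 5 statements merged into one kernel-verified Lean document; each statement's English description precedes it below -/
import Mathlib

section
/- If d ∈ ℓ∞(ℤ) is limit-periodic, then hull(d) is compact and there is a unique topological group structure on hull(d) with identity σ⁰(d) = d such that the map φ : ℤ → hull(d), k ↦ σᵏ(d), is a group homomorphism. Moreover, this group structure is abelian, and every neighborhood of d in hull(d) contains a compact open subgroup of finite index. -/
open BoundedContinuousFunction Filter

noncomputable def shiftk (k : ℤ) (d : ℤ →ᵇ ℝ) : ℤ →ᵇ ℝ :=
  d.compContinuous ⟨fun n => n + k, continuous_of_discreteTopology⟩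

noncomputable def orb (d : ℤ →ᵇ ℝ) : Set (ℤ →ᵇ ℝ) := Set.range (fun k : ℤ => shiftk k d)

noncomputable def hull (d : ℤ →ᵇ ℝ) : Set (ℤ →ᵇ ℝ) := closure (orb d)

def IsPeriodicPotential (p : ℤ →ᵇ ℝ) : Prop := (orb p).Finite

def IsLimitPeriodic (d : ℤ →ᵇ ℝ) : Prop :=
  d ∈ closure {p : ℤ →ᵇ ℝ | IsPeriodicPotential p}

noncomputable def shiftMem (d : ℤ →ᵇ ℝ) (k : ℤ) : ↥(hull d) :=
  ⟨shiftk k d, subset_closure ⟨k, rfl⟩⟩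

noncomputable def hullId (d : ℤ →ᵇ ℝ) : ↥(hull d) :=
  ⟨d, subset_closure ⟨0, by ext n; simp [shiftk]⟩⟩

noncomputable def freqModule (d : ℤ →ᵇ ℝ) : AddSubgroup ℝ :=
  AddSubgroup.closure {α : ℝ | ∃ L : ℂ, L ≠ 0 ∧
    Filter.Tendsto (fun n : ℕ => (1 / (2 * (n : ℂ))) *
      ∑ k ∈ Finset.Icc (-(n : ℤ)) (n : ℤ), (d k : ℂ) * Complex.exp (-(Complex.I) * k * α))
      Filter.atTop (nhds L)}

def IsFreqIntegerSet (d : ℤ →ᵇ ℝ) (S : Set ℕ) : Prop :=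
  (∀ n ∈ S, 0 < n) ∧
  freqModule d = AddSubgroup.closure ((fun n : ℕ => 2 * Real.pi / (n : ℝ)) '' S)

def CanonicalMul (d : ℤ →ᵇ ℝ) (m : ↥(hull d) → ↥(hull d) → ↥(hull d)) : Prop :=
  Continuous (fun p : ↥(hull d) × ↥(hull d) => m p.1 p.2) ∧
  ∀ k l : ℤ, m (shiftMem d k) (shiftMem d l) = shiftMem d (k + l)

def HullGroupIso (d e : ℤ →ᵇ ℝ) : Prop :=
  ∃ md me, CanonicalMul d md ∧ CanonicalMul e me ∧
    ∃ h : ↥(hull d) ≃ₜ ↥(hull e), ∀ x y, h (md x y) = me (h x) (h y)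

lemma shiftk_apply (k : ℤ) (d : ℤ →ᵇ ℝ) (n : ℤ) : shiftk k d n = d (n + k) := rfl

lemma shiftk_zero (d : ℤ →ᵇ ℝ) : shiftk 0 d = d := by ext n; simp [shiftk_apply]

lemma shiftk_shiftk (k l : ℤ) (d : ℤ →ᵇ ℝ) : shiftk l (shiftk k d) = shiftk (k + l) d := by
  ext n; simp [shiftk_apply]; ring_nf

lemma shiftk_dist_le (k : ℤ) (a b : ℤ →ᵇ ℝ) : dist (shiftk k a) (shiftk k b) ≤ dist a b := by
  refine (dist_le dist_nonneg).2 fun n => ?_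
  exact dist_coe_le_dist (n + k)

lemma shiftk_dist_eq (k : ℤ) (a b : ℤ →ᵇ ℝ) : dist (shiftk k a) (shiftk k b) = dist a b := by
  refine le_antisymm (shiftk_dist_le k a b) ?_
  have := shiftk_dist_le (-k) (shiftk k a) (shiftk k b)
  simpa [shiftk_shiftk, shiftk_zero] using this

lemma shiftMem_zero (d : ℤ →ᵇ ℝ) : shiftMem d 0 = hullId d :=
  Subtype.ext (shiftk_zero d)

lemma dense_shiftMem (d : ℤ →ᵇ ℝ) : Dense (Set.range (shiftMem d)) := by
  intro x
  rw [closure_subtype]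
  have : Subtype.val '' Set.range (shiftMem d) = orb d := by
    ext y
    constructor
    · rintro ⟨z, ⟨k, rfl⟩, rfl⟩; exact ⟨k, rfl⟩
    · rintro ⟨k, rfl⟩; exact ⟨shiftMem d k, ⟨k, rfl⟩, rfl⟩
  rw [this]
  exact x.2

-- key estimate
lemma dist_shiftMem_add (d : ℤ →ᵇ ℝ) (k l k' l' : ℤ) :
    dist (shiftMem d (k + l)) (shiftMem d (k' + l')) ≤
      dist (shiftMem d k) (shiftMem d k') + dist (shiftMem d l) (shiftMem d l') := by
  simp only [Subtype.dist_eq, shiftMem]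
  calc dist (shiftk (k + l) d) (shiftk (k' + l') d)
      ≤ dist (shiftk (k + l) d) (shiftk (k' + l) d)
        + dist (shiftk (k' + l) d) (shiftk (k' + l') d) := dist_triangle _ _ _
    _ = dist (shiftk k d) (shiftk k' d) + dist (shiftk l d) (shiftk l' d) := by
        have e1 : dist (shiftk (k + l) d) (shiftk (k' + l) d) = dist (shiftk k d) (shiftk k' d) := by
          rw [← shiftk_shiftk k l, ← shiftk_shiftk k' l, shiftk_dist_eq]
        have e2 : dist (shiftk (k' + l) d) (shiftk (k' + l') d) = dist (shiftk l d) (shiftk l' d) := by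
          rw [show (k' + l : ℤ) = l + k' by ring, show (k' + l' : ℤ) = l' + k' by ring,
            ← shiftk_shiftk l k', ← shiftk_shiftk l' k', shiftk_dist_eq]
        rw [e1, e2]

lemma dist_shiftMem_neg (d : ℤ →ᵇ ℝ) (k k' : ℤ) :
    dist (shiftMem d (-k)) (shiftMem d (-k')) = dist (shiftMem d k) (shiftMem d k') := by
  simp only [Subtype.dist_eq, shiftMem]
  rw [← shiftk_dist_eq (k + k') (shiftk (-k) d) (shiftk (-k') d), shiftk_shiftk, shiftk_shiftk]
  rw [show (-k + (k + k') : ℤ) = k' by ring, show (-k' + (k + k') : ℤ) = k by ring]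
  exact dist_comm _ _

lemma shiftk_congr_add (d : ℤ →ᵇ ℝ) {k l k' l' : ℤ} (h1 : shiftk k' d = shiftk k d)
    (h2 : shiftk l' d = shiftk l d) : shiftk (k' + l') d = shiftk (k + l) d := by
  rw [← shiftk_shiftk k' l', h1, shiftk_shiftk,
    show (k + l' : ℤ) = l' + k by ring, ← shiftk_shiftk l' k, h2, shiftk_shiftk,
    show (l + k : ℤ) = k + l by ring]

lemma shiftk_congr_neg (d : ℤ →ᵇ ℝ) {k k' : ℤ} (h1 : shiftk k' d = shiftk k d) :
    shiftk (-k') d = shiftk (-k) d := by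
  have := congrArg (shiftk (-k' - k)) h1
  rw [shiftk_shiftk, shiftk_shiftk, show (k' + (-k' - k) : ℤ) = -k by ring,
    show (k + (-k' - k) : ℤ) = -k' by ring] at this
  exact this.symm

open Classical in
noncomputable def pick (d : ℤ →ᵇ ℝ) (x : ↥(hull d)) : ℤ :=
  if h : x ∈ Set.range (shiftMem d) then h.choose else 0

lemma pick_spec (d : ℤ →ᵇ ℝ) {x : ↥(hull d)} (hx : x ∈ Set.range (shiftMem d)) :
    shiftMem d (pick d x) = x := by
  simp only [pick, dif_pos hx]
  exact hx.choose_spec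

noncomputable def orbSet (d : ℤ →ᵇ ℝ) : Set ↥(hull d) := Set.range (shiftMem d)

noncomputable def orbPair (d : ℤ →ᵇ ℝ) : Set (↥(hull d) × ↥(hull d)) :=
  (orbSet d) ×ˢ (orbSet d)

noncomputable def mulAux (d : ℤ →ᵇ ℝ) (a : ↥(orbPair d)) : ↥(hull d) :=
  shiftMem d (pick d a.1.1 + pick d a.1.2)

noncomputable def invAux (d : ℤ →ᵇ ℝ) (a : ↥(orbSet d)) : ↥(hull d) :=
  shiftMem d (-(pick d a.1))

lemma uc_mulAux (d : ℤ →ᵇ ℝ) : UniformContinuous (mulAux d) := by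
  refine (LipschitzWith.of_dist_le_mul (K := 2) fun a b => ?_).uniformContinuous
  have h1 := pick_spec d a.2.1
  have h2 := pick_spec d a.2.2
  have h3 := pick_spec d b.2.1
  have h4 := pick_spec d b.2.2
  calc dist (mulAux d a) (mulAux d b)
      ≤ dist (shiftMem d (pick d a.1.1)) (shiftMem d (pick d b.1.1))
        + dist (shiftMem d (pick d a.1.2)) (shiftMem d (pick d b.1.2)) :=
        dist_shiftMem_add d _ _ _ _
    _ = dist a.1.1 b.1.1 + dist a.1.2 b.1.2 := by rw [h1, h2, h3, h4]
    _ ≤ dist a b + dist a b := by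
        have ha : dist a.1.1 b.1.1 ≤ dist a b := by
          rw [Subtype.dist_eq a b, Prod.dist_eq]; exact le_max_left _ _
        have hb : dist a.1.2 b.1.2 ≤ dist a b := by
          rw [Subtype.dist_eq a b, Prod.dist_eq]; exact le_max_right _ _
        exact add_le_add ha hb
    _ = 2 * dist a b := by push_cast; ring

lemma uc_invAux (d : ℤ →ᵇ ℝ) : UniformContinuous (invAux d) := by
  refine (LipschitzWith.of_dist_le_mul (K := 1) fun a b => ?_).uniformContinuous
  have h1 := pick_spec d a.2
  have h3 := pick_spec d b.2
  calc dist (invAux d a) (invAux d b)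
      = dist (shiftMem d (pick d a.1)) (shiftMem d (pick d b.1)) := by
        rw [invAux, invAux, dist_shiftMem_neg, dist_comm]
    _ = dist a b := by rw [h1, h3, Subtype.dist_eq a b]
    _ ≤ 1 * dist a b := by simp

lemma ui_pair (d : ℤ →ᵇ ℝ) :
    IsUniformInducing (Subtype.val : ↥(orbPair d) → ↥(hull d) × ↥(hull d)) :=
  isUniformEmbedding_subtype_val.isUniformInducing

lemma dr_pair (d : ℤ →ᵇ ℝ) :
    DenseRange (Subtype.val : ↥(orbPair d) → ↥(hull d) × ↥(hull d)) := by
  rw [DenseRange, Subtype.range_coe]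
  exact (dense_shiftMem d).prod (dense_shiftMem d)

lemma ui_single (d : ℤ →ᵇ ℝ) :
    IsUniformInducing (Subtype.val : ↥(orbSet d) → ↥(hull d)) :=
  isUniformEmbedding_subtype_val.isUniformInducing

lemma dr_single (d : ℤ →ᵇ ℝ) :
    DenseRange (Subtype.val : ↥(orbSet d) → ↥(hull d)) := by
  rw [DenseRange, Subtype.range_coe]
  exact dense_shiftMem d

instance hullComplete (d : ℤ →ᵇ ℝ) : CompleteSpace ↥(hull d) :=
  isClosed_closure.completeSpace_coe

noncomputable def hmulP (d : ℤ →ᵇ ℝ) : ↥(hull d) × ↥(hull d) → ↥(hull d) :=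
  ((ui_pair d).isDenseInducing (dr_pair d)).extend (mulAux d)

noncomputable def hmul (d : ℤ →ᵇ ℝ) (x y : ↥(hull d)) : ↥(hull d) := hmulP d (x, y)

noncomputable def hinv (d : ℤ →ᵇ ℝ) : ↥(hull d) → ↥(hull d) :=
  ((ui_single d).isDenseInducing (dr_single d)).extend (invAux d)

lemma hmulP_continuous (d : ℤ →ᵇ ℝ) : Continuous (hmulP d) :=
  (uniformContinuous_uniformly_extend (ui_pair d) (dr_pair d) (uc_mulAux d)).continuous

lemma hinv_continuous (d : ℤ →ᵇ ℝ) : Continuous (hinv d) :=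
  (uniformContinuous_uniformly_extend (ui_single d) (dr_single d) (uc_invAux d)).continuous

lemma hmul_shift (d : ℤ →ᵇ ℝ) (k l : ℤ) :
    hmul d (shiftMem d k) (shiftMem d l) = shiftMem d (k + l) := by
  have memp : (shiftMem d k, shiftMem d l) ∈ orbPair d := ⟨⟨k, rfl⟩, ⟨l, rfl⟩⟩
  have := ((ui_pair d).isDenseInducing (dr_pair d)).extend_eq
    (uc_mulAux d).continuous (⟨(shiftMem d k, shiftMem d l), memp⟩ : ↥(orbPair d))
  rw [hmul, hmulP]
  rw [show ((shiftMem d k, shiftMem d l) : ↥(hull d) × ↥(hull d)) =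
    (⟨(shiftMem d k, shiftMem d l), memp⟩ : ↥(orbPair d)).val from rfl, this]
  rw [mulAux]
  have h1 : shiftMem d (pick d (shiftMem d k)) = shiftMem d k := pick_spec d ⟨k, rfl⟩
  have h2 : shiftMem d (pick d (shiftMem d l)) = shiftMem d l := pick_spec d ⟨l, rfl⟩
  exact Subtype.ext (shiftk_congr_add d (congrArg Subtype.val h1) (congrArg Subtype.val h2))

lemma hinv_shift (d : ℤ →ᵇ ℝ) (k : ℤ) : hinv d (shiftMem d k) = shiftMem d (-k) := by
  have memp : (shiftMem d k) ∈ orbSet d := ⟨k, rfl⟩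
  have := ((ui_single d).isDenseInducing (dr_single d)).extend_eq
    (uc_invAux d).continuous (⟨shiftMem d k, memp⟩ : ↥(orbSet d))
  rw [hinv]
  rw [show (shiftMem d k : ↥(hull d)) = (⟨shiftMem d k, memp⟩ : ↥(orbSet d)).val from rfl, this]
  rw [invAux]
  have h1 : shiftMem d (pick d (shiftMem d k)) = shiftMem d k := pick_spec d ⟨k, rfl⟩
  exact Subtype.ext (shiftk_congr_neg d (congrArg Subtype.val h1))

section Laws
variable (d : ℤ →ᵇ ℝ)

lemma hull_ext1 {f g : ↥(hull d) → ↥(hull d)} (hf : Continuous f) (hg : Continuous g)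
    (h : ∀ k : ℤ, f (shiftMem d k) = g (shiftMem d k)) : f = g := by
  refine Continuous.ext_on (dense_shiftMem d) hf hg ?_
  rintro x ⟨k, rfl⟩; exact h k

lemma hull_ext2 {f g : ↥(hull d) × ↥(hull d) → ↥(hull d)}
    (hf : Continuous f) (hg : Continuous g)
    (h : ∀ k l : ℤ, f (shiftMem d k, shiftMem d l) = g (shiftMem d k, shiftMem d l)) : f = g := by
  refine Continuous.ext_on ((dense_shiftMem d).prod (dense_shiftMem d)) hf hg ?_
  rintro ⟨x, y⟩ ⟨⟨k, rfl⟩, ⟨l, rfl⟩⟩; exact h k l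

lemma hull_ext3 {f g : ↥(hull d) × ↥(hull d) × ↥(hull d) → ↥(hull d)}
    (hf : Continuous f) (hg : Continuous g)
    (h : ∀ k l j : ℤ, f (shiftMem d k, shiftMem d l, shiftMem d j)
      = g (shiftMem d k, shiftMem d l, shiftMem d j)) : f = g := by
  refine Continuous.ext_on
    ((dense_shiftMem d).prod ((dense_shiftMem d).prod (dense_shiftMem d))) hf hg ?_
  rintro ⟨x, y, z⟩ ⟨⟨k, rfl⟩, ⟨l, rfl⟩, ⟨j, rfl⟩⟩; exact h k l j

lemma hmul_one_left (x : ↥(hull d)) : hmul d (hullId d) x = x := by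
  have := hull_ext1 d (f := fun x => hmul d (hullId d) x) (g := id)
    ((hmulP_continuous d).comp (continuous_const.prodMk continuous_id)) continuous_id
    (fun k => by simp only [id_eq, ← shiftMem_zero, hmul_shift, zero_add])
  exact congrFun this x

lemma hmul_one_right (x : ↥(hull d)) : hmul d x (hullId d) = x := by
  have := hull_ext1 d (f := fun x => hmul d x (hullId d)) (g := id)
    ((hmulP_continuous d).comp (continuous_id.prodMk continuous_const)) continuous_id
    (fun k => by simp only [id_eq, ← shiftMem_zero, hmul_shift, add_zero])
  exact congrFun this x

lemma hmul_comm (x y : ↥(hull d)) : hmul d x y = hmul d y x := by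
  have := hull_ext2 d (f := fun p => hmul d p.1 p.2) (g := fun p => hmul d p.2 p.1)
    (hmulP_continuous d) ((hmulP_continuous d).comp continuous_swap)
    (fun k l => by simp only [hmul_shift, add_comm])
  exact congrFun this (x, y)

lemma hmul_assoc (x y z : ↥(hull d)) : hmul d (hmul d x y) z = hmul d x (hmul d y z) := by
  have := hull_ext3 d (f := fun p => hmul d (hmul d p.1 p.2.1) p.2.2)
    (g := fun p => hmul d p.1 (hmul d p.2.1 p.2.2))
    ((hmulP_continuous d).comp
      (((hmulP_continuous d).comp
        ((continuous_fst).prodMk ((continuous_fst.comp continuous_snd)))).prodMk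
        (continuous_snd.comp continuous_snd)))
    ((hmulP_continuous d).comp
      ((continuous_fst).prodMk ((hmulP_continuous d).comp
        (((continuous_fst.comp continuous_snd)).prodMk
          (continuous_snd.comp continuous_snd)))))
    (fun k l j => by simp only [hmul_shift, add_assoc])
  exact congrFun this (x, y, z)

lemma hmul_inv (x : ↥(hull d)) : hmul d x (hinv d x) = hullId d := by
  have := hull_ext1 d (f := fun x => hmul d x (hinv d x)) (g := fun _ => hullId d)
    ((hmulP_continuous d).comp (continuous_id.prodMk (hinv_continuous d))) continuous_const
    (fun k => by simp only [hinv_shift, hmul_shift, add_neg_cancel, shiftMem_zero])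
  exact congrFun this x

lemma hmul_inv' (x : ↥(hull d)) : hmul d (hinv d x) x = hullId d := by
  rw [hmul_comm]; exact hmul_inv d x

end Laws

lemma isCompact_hull {d : ℤ →ᵇ ℝ} (hd : IsLimitPeriodic d) : IsCompact (hull d) := by
  refine TotallyBounded.isCompact_of_isClosed ?_ isClosed_closure
  refine TotallyBounded.closure ?_
  rw [Metric.totallyBounded_iff]
  intro ε hε
  obtain ⟨p, hp, hdp⟩ := Metric.mem_closure_iff.1 hd ε hε
  refine ⟨orb p, hp, ?_⟩
  rintro x ⟨k, rfl⟩
  refine Set.mem_biUnion (Set.mem_range_self k) ?_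
  rw [Metric.mem_ball]
  calc dist (shiftk k d) (shiftk k p) = dist d p := shiftk_dist_eq k d p
    _ < ε := hdp

lemma period_key {p : ℤ →ᵇ ℝ} {a b : ℤ} (h : shiftk a p = shiftk b p) :
    shiftk (b - a) p = p := by
  have := congrArg (shiftk (-a)) h
  rw [shiftk_shiftk, shiftk_shiftk, show (a + -a : ℤ) = 0 by ring, shiftk_zero,
    show (b + -a : ℤ) = b - a by ring] at this
  exact this.symm

lemma exists_pos_period {p : ℤ →ᵇ ℝ} (hp : IsPeriodicPotential p) :
    ∃ n : ℤ, 0 < n ∧ shiftk n p = p := by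
  have hni : ¬ Function.Injective (fun k : ℤ => shiftk k p) := by
    intro hinj
    exact (Set.infinite_range_of_injective hinj) hp
  rw [Function.not_injective_iff] at hni
  obtain ⟨a, b, heq, hne⟩ := hni
  rcases lt_or_gt_of_ne hne with h | h
  · exact ⟨b - a, by omega, period_key heq⟩
  · exact ⟨a - b, by omega, period_key heq.symm⟩

lemma shiftk_period_mul {p : ℤ →ᵇ ℝ} {n : ℤ} (hp : shiftk n p = p) (k : ℤ) :
    shiftk (k * n) p = p := by
  have hneg : shiftk (-n) p = p := by
    conv_lhs => rw [← hp]
    rw [shiftk_shiftk, show (n + -n : ℤ) = 0 by ring, shiftk_zero]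
  induction k using Int.induction_on with
  | zero => simpa using shiftk_zero p
  | succ i ih =>
    rw [show ((i + 1 : ℤ) * n) = n + i * n by ring, ← shiftk_shiftk, hp, ih]
  | pred i ih =>
    rw [show ((-(i : ℤ) - 1) * n) = -n + (-(i : ℤ) * n) by ring, ← shiftk_shiftk, hneg, ih]

lemma mul_unique {d : ℤ →ᵇ ℝ} {m : ↥(hull d) → ↥(hull d) → ↥(hull d)}
    (mc : Continuous (fun p : ↥(hull d) × ↥(hull d) => m p.1 p.2))
    (mh : ∀ k l : ℤ, m (shiftMem d k) (shiftMem d l) = shiftMem d (k + l)) :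
    m = hmul d := by
  have h := hull_ext2 d (f := fun p => m p.1 p.2) (g := fun p => hmul d p.1 p.2)
    mc (hmulP_continuous d) (fun k l => by simp only [mh, hmul_shift])
  funext x y
  exact congrFun h (x, y)


/-- If `d ∈ ℓ∞(ℤ)` is limit-periodic, then `hull d` is compact, there is a
unique (topological) group structure on `hull d` with identity `d` making
`φ : k ↦ σᵏ d` a homomorphism; moreover this structure is abelian and every neighborhood of `d`
contains a compact open finite-index subgroup. -/
theorem statement_0 (d : ℤ →ᵇ ℝ) (hd : IsLimitPeriodic d) :
    IsCompact (hull d) ∧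
    (∃! m : ↥(hull d) → ↥(hull d) → ↥(hull d),
      Continuous (fun p : ↥(hull d) × ↥(hull d) => m p.1 p.2) ∧
      (∀ x, m (hullId d) x = x) ∧ (∀ x, m x (hullId d) = x) ∧
      (∀ x y z, m (m x y) z = m x (m y z)) ∧
      (∃ inv : ↥(hull d) → ↥(hull d), Continuous inv ∧
        ∀ x, m x (inv x) = hullId d ∧ m (inv x) x = hullId d) ∧
      (∀ k l : ℤ, m (shiftMem d k) (shiftMem d l) = shiftMem d (k + l))) ∧
    (∀ m : ↥(hull d) → ↥(hull d) → ↥(hull d),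
      (Continuous (fun p : ↥(hull d) × ↥(hull d) => m p.1 p.2) ∧
      (∀ x, m (hullId d) x = x) ∧ (∀ x, m x (hullId d) = x) ∧
      (∀ x y z, m (m x y) z = m x (m y z)) ∧
      (∃ inv : ↥(hull d) → ↥(hull d), Continuous inv ∧
        ∀ x, m x (inv x) = hullId d ∧ m (inv x) x = hullId d) ∧
      (∀ k l : ℤ, m (shiftMem d k) (shiftMem d l) = shiftMem d (k + l))) →
      -- the group structure is abelian
      (∀ x y, m x y = m y x) ∧
      -- every neighborhood of `d` contains a compact open finite-index subgroup
      (∀ U ∈ nhds (hullId d), ∃ H : Set ↥(hull d),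
        H ⊆ U ∧ IsCompact H ∧ IsOpen H ∧ hullId d ∈ H ∧
        (∀ x ∈ H, ∀ y ∈ H, m x y ∈ H) ∧
        (∀ x ∈ H, ∀ y, m x y = hullId d → y ∈ H) ∧
        (∃ F : Finset ↥(hull d), ∀ g : ↥(hull d), ∃ c ∈ F, ∃ h ∈ H, g = m c h))) := by
  classical
  refine ⟨isCompact_hull hd, ?_, ?_⟩
  · refine ⟨hmul d, ⟨hmulP_continuous d, hmul_one_left d, hmul_one_right d, hmul_assoc d,
      ⟨hinv d, hinv_continuous d, fun x => ⟨hmul_inv d x, hmul_inv' d x⟩⟩, hmul_shift d⟩, ?_⟩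
    rintro m ⟨mc, -, -, -, -, mh⟩
    exact mul_unique mc mh
  · rintro m ⟨mc, m1, m2, massoc, ⟨inv, invC, invP⟩, mh⟩
    haveI : CompactSpace ↥(hull d) := isCompact_iff_compactSpace.1 (isCompact_hull hd)
    constructor
    · have heq := mul_unique mc mh
      intro x y
      rw [heq, hmul_comm]
    · intro U hU
      obtain ⟨ε, hε, hball⟩ := Metric.mem_nhds_iff.1 hU
      obtain ⟨p, hp, hdp⟩ := Metric.mem_closure_iff.1 hd (ε / 4) (by positivity)
      obtain ⟨n, hn, hper⟩ := exists_pos_period hp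
      set R : Set ↥(hull d) := Set.range (fun k : ℤ => shiftMem d (k * n)) with hR
      set H : Set ↥(hull d) := closure R with hHdef
      -- identity in H
      have hIdH : hullId d ∈ H := subset_closure ⟨0, by simp only [zero_mul, shiftMem_zero]⟩
      have hHcl : IsClosed H := isClosed_closure
      have hHcpt : IsCompact H := hHcl.isCompact
      -- H ⊆ U
      have hHU : H ⊆ U := by
        have hRball : R ⊆ Metric.closedBall (hullId d) (ε / 2) := by
          rintro x ⟨k, rfl⟩
          rw [Metric.mem_closedBall, Subtype.dist_eq]
          show dist (shiftk (k * n) d) d ≤ ε / 2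
          calc dist (shiftk (k * n) d) d
              ≤ dist (shiftk (k * n) d) (shiftk (k * n) p) + dist (shiftk (k * n) p) d :=
              dist_triangle _ _ _
            _ = dist d p + dist p d := by
                rw [shiftk_dist_eq, shiftk_period_mul hper k]
            _ ≤ ε / 2 := by
                rw [dist_comm p d]
                linarith
        have hsub2 : Metric.closedBall (hullId d) (ε / 2) ⊆ Metric.ball (hullId d) ε :=
          Metric.closedBall_subset_ball (by linarith)
        exact fun x hx => hball (hsub2 (closure_minimal hRball Metric.isClosed_closedBall hx))
      -- closed under multiplication
      have hMulH : ∀ x ∈ H, ∀ y ∈ H, m x y ∈ H := by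
        intro x hx y hy
        have hxy : (x, y) ∈ closure (R ×ˢ R) := by
          rw [closure_prod_eq]; exact ⟨hx, hy⟩
        have h1 : m x y ∈ closure ((fun q : ↥(hull d) × ↥(hull d) => m q.1 q.2) '' (R ×ˢ R)) :=
          image_closure_subset_closure_image mc ⟨(x, y), hxy, rfl⟩
        refine closure_mono ?_ h1
        rintro z ⟨⟨u, v⟩, ⟨⟨k, rfl⟩, ⟨l, rfl⟩⟩, rfl⟩
        refine ⟨k + l, ?_⟩
        show shiftMem d ((k + l) * n) = m (shiftMem d (k * n)) (shiftMem d (l * n))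
        rw [add_mul, ← mh]
      -- uniqueness of inverse
      have hinvU : ∀ x y, m x y = hullId d → y = inv x := by
        intro x y h
        calc y = m (hullId d) y := (m1 y).symm
          _ = m (m (inv x) x) y := by rw [(invP x).2]
          _ = m (inv x) (m x y) := massoc _ _ _
          _ = m (inv x) (hullId d) := by rw [h]
          _ = inv x := m2 _
      -- inverse preserves H
      have hinvH : ∀ x ∈ H, inv x ∈ H := by
        intro x hx
        have h1 : inv x ∈ closure (inv '' R) :=
          image_closure_subset_closure_image invC ⟨x, hx, rfl⟩
        refine closure_mono ?_ h1
        rintro z ⟨u, ⟨k, rfl⟩, rfl⟩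
        have h2 : shiftMem d (-(k * n)) = inv (shiftMem d (k * n)) :=
          hinvU _ _ (by rw [mh, add_neg_cancel, shiftMem_zero])
        refine ⟨-k, ?_⟩
        show shiftMem d (-k * n) = inv (shiftMem d (k * n))
        rw [neg_mul, h2]
      have hInvCond : ∀ x ∈ H, ∀ y, m x y = hullId d → y ∈ H := by
        intro x hx y h
        rw [hinvU x y h]
        exact hinvH x hx
      -- covering by cosets
      set N : ℕ := n.toNat with hN
      set C : ℕ → Set ↥(hull d) := fun j => (fun x => m (shiftMem d (j : ℤ)) x) '' H with hC
      have hCcpt : ∀ j, IsCompact (C j) := fun j =>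
        hHcpt.image (mc.comp (continuous_const.prodMk continuous_id))
      have hcover : ∀ g : ↥(hull d), ∃ j, j < N ∧ g ∈ C j := by
        set W := ⋃ j ∈ Finset.range N, C j with hW
        have hWcl : IsClosed W :=
          (Finset.range N).finite_toSet.isClosed_biUnion (fun j _ => (hCcpt j).isClosed)
        have hsub : Set.range (shiftMem d) ⊆ W := by
          rintro x ⟨a, rfl⟩
          have hmod0 : (0 : ℤ) ≤ a % n := Int.emod_nonneg a hn.ne'
          have hmodlt : a % n < n := Int.emod_lt_of_pos a hn
          refine Set.mem_biUnion (Finset.mem_range.2 ((Int.toNat_lt_toNat hn).2 hmodlt)) ?_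
          refine ⟨shiftMem d ((a / n) * n), subset_closure ⟨a / n, rfl⟩, ?_⟩
          show m (shiftMem d (((a % n).toNat : ℕ) : ℤ)) (shiftMem d (a / n * n)) = shiftMem d a
          rw [mh]
          congr 1
          rw [Int.toNat_of_nonneg hmod0]
          rw [show (a % n + a / n * n : ℤ) = a % n + n * (a / n) by ring]
          exact Int.emod_add_mul_ediv a n
        have huniv : ∀ g : ↥(hull d), g ∈ W := by
          intro g
          have := closure_minimal hsub hWcl
          rw [(dense_shiftMem d).closure_eq] at this
          exact this (Set.mem_univ g)
        intro g
        obtain ⟨j, hj, hgC⟩ := Set.mem_iUnion₂.1 (huniv g)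
        exact ⟨j, Finset.mem_range.1 hj, hgC⟩
      -- a coset meeting H is contained in H
      have hCosetSub : ∀ j : ℕ, ∀ z ∈ C j, z ∈ H → C j ⊆ H := by
        rintro j z ⟨h₀, hh₀, rfl⟩ hzH w ⟨h₁, hh₁, rfl⟩
        have key : m (shiftMem d (j : ℤ)) h₁
            = m (m (shiftMem d (j : ℤ)) h₀) (m (inv h₀) h₁) := by
          calc m (shiftMem d (j : ℤ)) h₁
              = m (shiftMem d (j : ℤ)) (m (hullId d) h₁) := by rw [m1]
            _ = m (shiftMem d (j : ℤ)) (m (m h₀ (inv h₀)) h₁) := by rw [(invP h₀).1]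
            _ = m (shiftMem d (j : ℤ)) (m h₀ (m (inv h₀) h₁)) := by rw [massoc h₀]
            _ = m (m (shiftMem d (j : ℤ)) h₀) (m (inv h₀) h₁) := (massoc _ _ _).symm
        show m (shiftMem d (j : ℤ)) h₁ ∈ H
        rw [key]
        exact hMulH _ hzH _ (hMulH _ (hinvH _ hh₀) _ hh₁)
      -- H is open
      have hOpen : IsOpen H := by
        set bad := (Finset.range N).filter (fun j => ∀ z ∈ C j, z ∉ H) with hbad
        have hWeq : Hᶜ = ⋃ j ∈ bad, C j := by
          ext x
          constructor
          · intro hx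
            obtain ⟨j, hjN, hjC⟩ := hcover x
            refine Set.mem_biUnion ?_ hjC
            refine Finset.mem_filter.2 ⟨Finset.mem_range.2 hjN, ?_⟩
            intro z hz hzH
            exact hx (hCosetSub j z hz hzH hjC)
          · intro hx
            obtain ⟨j, hj, hxC⟩ := Set.mem_iUnion₂.1 hx
            exact (Finset.mem_filter.1 hj).2 x hxC
        rw [← isClosed_compl_iff, hWeq]
        exact bad.finite_toSet.isClosed_biUnion (fun j _ => (hCcpt j).isClosed)
      refine ⟨H, hHU, hHcpt, hOpen, hIdH, hMulH, hInvCond,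
        (Finset.range N).image (fun j : ℕ => shiftMem d (j : ℤ)), ?_⟩
      intro g
      obtain ⟨j, hjN, hg⟩ := hcover g
      obtain ⟨h, hh, hgh⟩ := hg
      exact ⟨shiftMem d (j : ℤ), Finset.mem_image.2 ⟨j, Finset.mem_range.2 hjN, rfl⟩,
        h, hh, hgh.symm⟩
end

section
/- Let Ω be a Cantor group, T a minimal translation of Ω, and f ∈ C(Ω,ℝ). Define F : Ω → ℓ∞(ℤ) by F(ω) = (f(Tⁿ(ω)))_{n∈ℤ}. Then F(ω) is limit-periodic for every ω ∈ Ω, and F(Ω) = hull(F(ω)) for every ω ∈ Ω. -/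
open BoundedContinuousFunction Filter

variable {Ω : Type*} [TopologicalSpace Ω] [CommGroup Ω] [IsTopologicalGroup Ω] [CompactSpace Ω]
  [TotallyDisconnectedSpace Ω]

/-- The translation `T(ω) = ω·a` is minimal: every `T`-orbit is dense. -/
def IsMinimalTranslation (a : Ω) : Prop :=
  ∀ ω : Ω, Dense (Set.range fun n : ℤ => ω * a ^ n)

/-- `Ω` has no isolated points. -/
def NoIsolatedPoints (Ω : Type*) [TopologicalSpace Ω] : Prop :=
  ∀ ω : Ω, Filter.NeBot (nhdsWithin ω {ω}ᶜ)

/-- `F(ω) = (f(Tⁿ(ω)))_{n ∈ ℤ}` where `T` is the translation by `a`. -/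
noncomputable def sample (f : C(Ω, ℝ)) (a ω : Ω) : ℤ →ᵇ ℝ :=
  (BoundedContinuousFunction.mkOfCompact f).compContinuous
    ⟨fun n : ℤ => ω * a ^ n, continuous_of_discreteTopology⟩

lemma exists_nhd_uc (f : C(Ω, ℝ)) {ε : ℝ} (hε : 0 < ε) :
    ∃ U ∈ nhds (1 : Ω), ∀ x y : Ω, y / x ∈ U → dist (f x) (f y) ≤ ε := by
  letI : UniformSpace Ω := IsTopologicalGroup.rightUniformSpace Ω
  haveI : IsUniformGroup Ω := isUniformGroup_of_commGroup
  have h : UniformContinuous f := CompactSpace.uniformContinuous_of_continuous f.continuous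
  have h2 : {p : Ω × Ω | dist (f p.1) (f p.2) ≤ ε} ∈ uniformity Ω := by
    have := h (Metric.dist_mem_uniformity (α := ℝ) hε)
    exact Filter.mem_of_superset this (fun p hp => le_of_lt (by simpa using hp))
  rw [uniformity_eq_comap_nhds_one] at h2
  rcases h2 with ⟨U, hU, hUsub⟩
  exact ⟨U, hU, fun x y hxy => hUsub (by simpa using hxy : (x, y) ∈ _)⟩

lemma sample_apply (f : C(Ω, ℝ)) (a ω : Ω) (n : ℤ) : sample f a ω n = f (ω * a ^ n) := rfl

lemma sample_continuous (f : C(Ω, ℝ)) (a : Ω) : Continuous (sample f a) := by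
  rw [continuous_iff_continuousAt]
  intro ω
  rw [ContinuousAt, Metric.tendsto_nhds]
  intro ε hε
  obtain ⟨U, hU, hUuc⟩ := exists_nhd_uc f (half_pos hε)
  have hev : ∀ᶠ ω' in nhds ω, ω' / ω ∈ U := by
    have hc : Continuous (fun ω' : Ω => ω' / ω) := continuous_id.div' continuous_const
    have : Filter.Tendsto (fun ω' : Ω => ω' / ω) (nhds ω) (nhds 1) := by
      simpa using hc.tendsto ω
    exact this hU
  filter_upwards [hev] with ω' hω'
  have : dist (sample f a ω') (sample f a ω) ≤ ε / 2 := by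
    rw [BoundedContinuousFunction.dist_le (le_of_lt (half_pos hε))]
    intro n
    rw [sample_apply, sample_apply, dist_comm]
    refine hUuc (ω * a ^ n) (ω' * a ^ n) ?_
    simpa [mul_div_mul_right_eq_div] using hω'
  linarith

lemma shiftk_sample (f : C(Ω, ℝ)) (a ω : Ω) (k : ℤ) :
    shiftk k (sample f a ω) = sample f a (ω * a ^ k) := by
  ext n
  show f (ω * a ^ (n + k)) = f (ω * a ^ k * a ^ n)
  congr 1
  rw [zpow_add]
  group

lemma orb_sample (f : C(Ω, ℝ)) (a ω : Ω) :
    orb (sample f a ω) = sample f a '' (Set.range fun k : ℤ => ω * a ^ k) := by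
  rw [orb, ← Set.range_comp]
  exact congrArg Set.range (funext fun k => shiftk_sample f a ω k)


theorem statement_9_aux [TotallyDisconnectedSpace Ω]
    (a : Ω) (hmin : ∀ ω : Ω, Dense (Set.range fun n : ℤ => ω * a ^ n)) (f : C(Ω, ℝ)) :
    (∀ ω : Ω, IsLimitPeriodic (sample f a ω)) ∧
    (∀ ω : Ω, Set.range (sample f a) = hull (sample f a ω)) := by
  constructor
  · intro ω
    rw [IsLimitPeriodic, Metric.mem_closure_iff]
    intro ε hε
    obtain ⟨U, hU, hUuc⟩ := exists_nhd_uc f (half_pos hε)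
    -- find a clopen neighborhood of 1 inside U
    obtain ⟨V, hVU, hVopen, hV1⟩ := mem_nhds_iff.mp hU
    obtain ⟨W, hWclopen, hW1, hWV⟩ :=
      compact_exists_isClopen_in_isOpen hVopen hV1
    obtain ⟨H, hHW⟩ := IsTopologicalGroup.exist_openSubgroup_sub_clopen_nhds_of_one hWclopen hW1
    -- a has finite order mod H
    haveI : Finite (Ω ⧸ H.toSubgroup) := Subgroup.quotient_finite_of_isOpen H.toSubgroup H.isOpen
    obtain ⟨k, l, hkl, hmk⟩ := Finite.exists_ne_map_eq_of_infinite
      (fun k : ℤ => (QuotientGroup.mk (a ^ k) : Ω ⧸ H.toSubgroup))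
    have hpow : a ^ (l - k) ∈ H.toSubgroup := by
      have h := (QuotientGroup.eq).mp hmk
      simpa [← zpow_neg, ← zpow_add, neg_add_eq_sub] using h
    set N : ℕ := (l - k).natAbs with hNdef
    have hN : 0 < N := Int.natAbs_pos.mpr (sub_ne_zero.mpr (Ne.symm hkl))
    have haN : a ^ ((N : ℤ)) ∈ H.toSubgroup := by
      rcases Int.natAbs_eq (l - k) with h | h
      · rw [← h]; exact hpow
      · have : a ^ ((N : ℤ)) = (a ^ (l - k))⁻¹ := by
          rw [← zpow_neg, h, neg_neg]
        rw [this]; exact Subgroup.inv_mem _ hpow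
    have hNm : ∀ m : ℤ, a ^ ((N : ℤ) * m) ∈ H.toSubgroup := fun m => by
      rw [zpow_mul]; exact Subgroup.zpow_mem _ haN m
    set p : ℤ →ᵇ ℝ := (BoundedContinuousFunction.mkOfCompact f).compContinuous
      ⟨fun n : ℤ => ω * a ^ (n % (N : ℤ)), continuous_of_discreteTopology⟩ with hp
    have key : ∀ n j : ℤ, (n + j % (N : ℤ)) % (N : ℤ) = (n + j) % (N : ℤ) := fun n j => by
      rw [Int.add_emod, Int.emod_emod_of_dvd _ dvd_rfl, ← Int.add_emod]
    have hper : IsPeriodicPotential p := by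
      apply Set.Finite.subset
        (Set.Finite.image (fun j : ℤ => shiftk j p) (Set.finite_Icc (0 : ℤ) (N : ℤ)))
      rintro x ⟨j, rfl⟩
      refine ⟨j % (N : ℤ), ⟨Int.emod_nonneg j (by exact_mod_cast hN.ne'),
        le_of_lt (Int.emod_lt_of_pos j (by exact_mod_cast hN))⟩, ?_⟩
      ext n
      show f (ω * a ^ ((n + j % (N : ℤ)) % (N : ℤ))) = f (ω * a ^ ((n + j) % (N : ℤ)))
      rw [key]
    have hdist : dist (sample f a ω) p ≤ ε / 2 := by
      rw [BoundedContinuousFunction.dist_le (le_of_lt (half_pos hε))]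
      intro n
      show dist (f (ω * a ^ n)) (f (ω * a ^ (n % (N : ℤ)))) ≤ ε / 2
      refine hUuc _ _ ?_
      have hexp : n % (N : ℤ) - n = -((N : ℤ) * (n / (N : ℤ))) := by
        linarith [Int.mul_ediv_add_emod n (N : ℤ)]
      have heq : (ω * a ^ (n % (N : ℤ))) / (ω * a ^ n) = a ^ (n % (N : ℤ) - n) := by
        simp [div_eq_mul_inv, zpow_sub, mul_inv, mul_comm, mul_assoc, mul_left_comm]
      have hmem : (ω * a ^ (n % (N : ℤ))) / (ω * a ^ n) ∈ H.toSubgroup := by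
        rw [heq, hexp, zpow_neg]
        exact Subgroup.inv_mem _ (hNm (n / (N : ℤ)))
      exact hVU (hWV (hHW hmem))
    refine ⟨p, hper, lt_of_le_of_lt hdist (half_lt_self hε)⟩
  · intro ω
    apply Set.Subset.antisymm
    · intro x ⟨ω', hω'⟩
      subst hω'
      have h1 : sample f a '' (Set.range fun k : ℤ => ω * a ^ k) ⊆ hull (sample f a ω) := by
        rw [← orb_sample]; exact subset_closure
      have h2 : sample f a '' closure (Set.range fun k : ℤ => ω * a ^ k) ⊆
          closure (sample f a '' (Set.range fun k : ℤ => ω * a ^ k)) :=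
        image_closure_subset_closure_image (sample_continuous f a)
      have : ω' ∈ closure (Set.range fun k : ℤ => ω * a ^ k) := (hmin ω).closure_eq ▸ trivial
      have := h2 ⟨ω', this, rfl⟩
      rw [← orb_sample] at this
      exact this
    · rw [hull]
      refine closure_minimal ?_ (isCompact_range (sample_continuous f a)).isClosed
      rintro x ⟨k, rfl⟩
      exact ⟨ω * a ^ k, (shiftk_sample f a ω k).symm⟩


/-- If `Ω` is a Cantor group, `T` a minimal translation (by `a`) and
`f ∈ C(Ω,ℝ)`, then `F(ω) = (f(Tⁿω))_{n∈ℤ}` is limit-periodic for every `ω`, and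
`F(Ω) = hull (F(ω))` for every `ω ∈ Ω`. -/
theorem statement_9 {Ω : Type*} [TopologicalSpace Ω] [CommGroup Ω] [IsTopologicalGroup Ω]
    [CompactSpace Ω] [TotallyDisconnectedSpace Ω] (hni : NoIsolatedPoints Ω)
    (a : Ω) (hmin : IsMinimalTranslation a) (f : C(Ω, ℝ)) :
    (∀ ω : Ω, IsLimitPeriodic (sample f a ω)) ∧
    (∀ ω : Ω, Set.range (sample f a) = hull (sample f a ω)) := by
  exact statement_9_aux a hmin f
end

section
/- Let Ω be a Cantor group with a minimal translation T and identity element e. A topological group G is isomorphic (as a topological group) to hull(F(e)) for some f ∈ C(Ω,ℝ), where F(e) = (f(Tⁿ(e)))_{n∈ℤ}, if and only if G is isomorphic to a quotient of Ω by a closed subgroup. -/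
open BoundedContinuousFunction Filter

variable {Ω : Type*} [TopologicalSpace Ω] [CommGroup Ω] [IsTopologicalGroup Ω] [CompactSpace Ω]
  [TotallyDisconnectedSpace Ω]

set_option linter.unusedSectionVars false
open scoped Uniformity Topology

namespace St12

lemma sample_apply (f : C(Ω, ℝ)) (a ω : Ω) (n : ℤ) : sample f a ω n = f (ω * a ^ n) := rfl

lemma shiftk_apply (k : ℤ) (d : ℤ →ᵇ ℝ) (n : ℤ) : shiftk k d n = d (n + k) := rfl

lemma shiftk_sample (f : C(Ω, ℝ)) (a ω : Ω) (k : ℤ) :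
    shiftk k (sample f a ω) = sample f a (ω * a ^ k) := by
  ext n
  simp only [shiftk_apply, sample_apply, zpow_add, mul_assoc, mul_comm, mul_left_comm]

lemma denseRange_zpow {a : Ω} (hmin : IsMinimalTranslation a) :
    DenseRange (fun k : ℤ => a ^ k) := by
  have := hmin 1
  simpa [DenseRange] using this

lemma continuous_sample (f : C(Ω, ℝ)) (a : Ω) : Continuous (fun ω => sample f a ω) := by
  letI : UniformSpace Ω := IsTopologicalGroup.rightUniformSpace Ω
  haveI : IsUniformGroup Ω := isUniformGroup_of_commGroup
  have hf : UniformContinuous f := CompactSpace.uniformContinuous_of_continuous f.continuous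
  rw [continuous_iff_continuousAt]
  intro ω₀
  rw [ContinuousAt, Metric.tendsto_nhds]
  intro ε hε
  have hmem : {p : Ω × Ω | dist (f p.1) (f p.2) < ε / 2} ∈ 𝓤 Ω :=
    hf (Metric.dist_mem_uniformity (by positivity))
  rw [uniformity_eq_comap_nhds_one Ω, Filter.mem_comap] at hmem
  obtain ⟨V, hV, hVsub⟩ := hmem
  have hV' : (fun ω => ω / ω₀) ⁻¹' V ∈ 𝓝 ω₀ := by
    apply ContinuousAt.preimage_mem_nhds
    · exact (continuous_id.div' continuous_const).continuousAt
    · simpa using hV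
  filter_upwards [hV'] with ω hω
  have hle : dist (sample f a ω) (sample f a ω₀) ≤ ε / 2 := by
    rw [BoundedContinuousFunction.dist_le (by positivity)]
    intro n
    have hpair : ((ω₀ * a ^ n, ω * a ^ n) : Ω × Ω) ∈ (fun p : Ω × Ω => p.2 / p.1) ⁻¹' V := by
      have : (ω * a ^ n) / (ω₀ * a ^ n) = ω / ω₀ := by
        rw [mul_div_mul_right_eq_div]
      simpa [this] using hω
    have := hVsub hpair
    simp only [Set.mem_setOf_eq] at this
    rw [sample_apply, sample_apply, dist_comm]
    exact this.le
  linarith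

lemma hull_sample_eq (f : C(Ω, ℝ)) {a : Ω} (hmin : IsMinimalTranslation a) :
    hull (sample f a 1) = Set.range (sample f a) := by
  have hc : Continuous (sample f a) := continuous_sample f a
  have horb : orb (sample f a 1) = sample f a '' Set.range (fun k : ℤ => a ^ k) := by
    rw [← Set.range_comp]
    have key : ∀ k : ℤ, shiftk k (sample f a 1) = (sample f a ∘ fun k : ℤ => a ^ k) k := by
      intro k
      show shiftk k (sample f a 1) = sample f a (a ^ k)
      rw [shiftk_sample, one_mul]
    ext d
    constructor
    · rintro ⟨k, rfl⟩
      exact ⟨k, (key k).symm⟩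
    · rintro ⟨k, rfl⟩
      exact ⟨k, key k⟩
  unfold hull
  apply subset_antisymm
  · apply closure_minimal
    · rw [horb]
      exact Set.image_subset_range _ _
    · exact (isCompact_range hc).isClosed
  · have : Set.range (sample f a) = sample f a '' closure (Set.range fun k : ℤ => a ^ k) := by
      rw [(denseRange_zpow hmin).closure_eq, Set.image_univ]
    rw [this]
    refine (image_closure_subset_closure_image hc).trans ?_
    rw [← horb]

/-- The stabilizer subgroup of `f`. -/
def stab (f : C(Ω, ℝ)) : Subgroup Ω where
  carrier := {ω | ∀ x, f (ω * x) = f x}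
  one_mem' := by simp
  mul_mem' := by
    intro x y hx hy z
    rw [mul_assoc, hx, hy]
  inv_mem' := by
    intro x hx z
    have := hx (x⁻¹ * z)
    rwa [mul_inv_cancel_left, eq_comm] at this

lemma isClosed_stab (f : C(Ω, ℝ)) : IsClosed ((stab f : Subgroup Ω) : Set Ω) := by
  have : ((stab f : Subgroup Ω) : Set Ω) = ⋂ x : Ω, {ω : Ω | f (ω * x) = f x} := by
    ext ω; simp [stab, Set.mem_iInter]
  rw [this]
  exact isClosed_iInter fun x =>
    isClosed_eq (f.continuous.comp (continuous_id.mul continuous_const)) continuous_const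

lemma sample_eq_iff (f : C(Ω, ℝ)) {a : Ω} (hmin : IsMinimalTranslation a) (ω ω' : Ω) :
    sample f a ω = sample f a ω' ↔ ∀ x, f (ω * x) = f (ω' * x) := by
  constructor
  · intro h
    have heq : (fun x : Ω => f (ω * x)) = fun x : Ω => f (ω' * x) := by
      refine Continuous.ext_on (denseRange_zpow hmin)
        (f.continuous.comp (continuous_const.mul continuous_id))
        (f.continuous.comp (continuous_const.mul continuous_id)) ?_
      rintro x ⟨k, rfl⟩
      have := congrFun (congrArg (fun d : ℤ →ᵇ ℝ => (d : ℤ → ℝ)) h) k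
      simpa [sample_apply] using this
    exact fun x => congrFun heq x
  · intro h
    ext n
    simp only [sample_apply]
    exact h _

lemma sample_eq_iff_mk (f : C(Ω, ℝ)) {a : Ω} (hmin : IsMinimalTranslation a) (ω ω' : Ω) :
    sample f a ω = sample f a ω' ↔
      (QuotientGroup.mk ω : Ω ⧸ stab f) = QuotientGroup.mk ω' := by
  rw [sample_eq_iff f hmin, QuotientGroup.eq]
  constructor
  · intro h x
    show f (ω⁻¹ * ω' * x) = f x
    have h1 := h (ω⁻¹ * x)
    rw [mul_inv_cancel_left] at h1
    rw [mul_comm ω⁻¹ ω', mul_assoc]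
    exact h1.symm
  · intro h x
    have h1 : f (ω⁻¹ * ω' * (ω * x)) = f (ω * x) := h (ω * x)
    rw [mul_comm ω⁻¹ ω', mul_assoc ω' ω⁻¹, inv_mul_cancel_left] at h1
    exact h1.symm


lemma sample_mem_hull (f : C(Ω, ℝ)) {a : Ω} (hmin : IsMinimalTranslation a) (ω : Ω) :
    sample f a ω ∈ hull (sample f a 1) := by
  rw [hull_sample_eq f hmin]
  exact ⟨ω, rfl⟩

lemma exists_e (f : C(Ω, ℝ)) {a : Ω} (hmin : IsMinimalTranslation a) (N : Subgroup Ω)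
    (hN : stab f = N) :
    ∃ e : (Ω ⧸ N) ≃ₜ ↥(hull (sample f a 1)),
      ∀ ω : Ω, (e (QuotientGroup.mk ω) : ℤ →ᵇ ℝ) = sample f a ω := by
  subst hN
  have hresp : ∀ (ω ω' : Ω), (QuotientGroup.mk ω : Ω ⧸ stab f) = QuotientGroup.mk ω' →
      sample f a ω = sample f a ω' := fun ω ω' h => (sample_eq_iff_mk f hmin ω ω').mpr h
  let φ : (Ω ⧸ stab f) → ↥(hull (sample f a 1)) := fun q =>
    Quotient.liftOn' q (fun ω => (⟨sample f a ω, sample_mem_hull f hmin ω⟩ :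
        ↥(hull (sample f a 1))))
      (fun ω ω' h => Subtype.ext (hresp ω ω' (Quotient.sound' h)))
  have hφ : ∀ ω : Ω, φ (QuotientGroup.mk ω) = ⟨sample f a ω, sample_mem_hull f hmin ω⟩ :=
    fun ω => rfl
  have hcont : Continuous φ := by
    rw [(QuotientGroup.isQuotientMap_mk (stab f)).continuous_iff]
    exact (continuous_sample f a).subtype_mk _
  have hinj : Function.Injective φ := by
    intro q q'
    induction q using QuotientGroup.induction_on
    induction q' using QuotientGroup.induction_on
    rename_i ω ω'
    intro h
    rw [hφ, hφ] at h
    exact (sample_eq_iff_mk f hmin ω ω').mp (congrArg Subtype.val h)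
  have hsurj : Function.Surjective φ := by
    rintro ⟨x, hx⟩
    rw [hull_sample_eq f hmin] at hx
    obtain ⟨ω, rfl⟩ := hx
    exact ⟨QuotientGroup.mk ω, rfl⟩
  let E : (Ω ⧸ stab f) ≃ ↥(hull (sample f a 1)) := Equiv.ofBijective φ ⟨hinj, hsurj⟩
  have hE : Continuous E := hcont
  exact ⟨Continuous.homeoOfEquivCompactToT2 hE, fun ω => congrArg Subtype.val (hφ ω)⟩


lemma denseRange_mk_zpow {a : Ω} (hmin : IsMinimalTranslation a) (N : Subgroup Ω) :
    DenseRange (fun k : ℤ => (QuotientGroup.mk (a ^ k) : Ω ⧸ N)) := by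
  have h1 : DenseRange (QuotientGroup.mk : Ω → Ω ⧸ N) :=
    (QuotientGroup.mk_surjective).denseRange
  have h2 := (h1.comp (denseRange_zpow hmin) QuotientGroup.continuous_mk)
  exact h2

lemma isOpen_closure_zpowers {a : Ω} (hmin : IsMinimalTranslation a) {m : ℕ} (hm : 0 < m) :
    IsOpen ((Subgroup.zpowers (a ^ m)).topologicalClosure : Set Ω) := by
  set C := (Subgroup.zpowers (a ^ m)).topologicalClosure with hC
  haveI hclosed : IsClosed (C : Set Ω) := Subgroup.isClosed_topologicalClosure _
  -- In the quotient, the image of a has finite order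
  have hma : ((QuotientGroup.mk (a ^ m) : Ω ⧸ C)) = 1 := by
    rw [QuotientGroup.eq_one_iff]
    exact (Subgroup.le_topologicalClosure _) (Subgroup.mem_zpowers _)
  have hfo : IsOfFinOrder (QuotientGroup.mk a : Ω ⧸ C) := by
    rw [isOfFinOrder_iff_pow_eq_one]
    exact ⟨m, hm, by rw [← QuotientGroup.mk_pow]; exact hma⟩
  have hfin : (Subgroup.zpowers (QuotientGroup.mk a : Ω ⧸ C) : Set (Ω ⧸ C)).Finite :=
    hfo.finite_zpowers
  have hrange : Set.range (fun k : ℤ => (QuotientGroup.mk (a ^ k) : Ω ⧸ C)) ⊆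
      (Subgroup.zpowers (QuotientGroup.mk a : Ω ⧸ C) : Set (Ω ⧸ C)) := by
    rintro x ⟨k, rfl⟩
    show (QuotientGroup.mk (a ^ k) : Ω ⧸ C) ∈ _
    rw [QuotientGroup.mk_zpow]
    exact Subgroup.zpow_mem _ (Subgroup.mem_zpowers _) k
  haveI : Finite (Ω ⧸ C) := by
    have hd := (denseRange_mk_zpow hmin C)
    have : (Set.univ : Set (Ω ⧸ C)).Finite := by
      have hcl : closure (Set.range (fun k : ℤ => (QuotientGroup.mk (a ^ k) : Ω ⧸ C))) ⊆
          (Subgroup.zpowers (QuotientGroup.mk a : Ω ⧸ C) : Set (Ω ⧸ C)) :=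
        closure_minimal hrange hfin.isClosed
      rw [hd.closure_range] at hcl
      exact hfin.subset hcl
    exact Set.finite_univ_iff.mp this
  haveI : DiscreteTopology (Ω ⧸ C) := Finite.instDiscreteTopology
  have : (C : Set Ω) = (QuotientGroup.mk : Ω → Ω ⧸ C) ⁻¹' {1} := by
    ext x
    simp [QuotientGroup.eq_one_iff]
  rw [this]
  exact (isOpen_discrete _).preimage QuotientGroup.continuous_mk

lemma exists_closure_zpowers_subset {a : Ω} {U : Set Ω} (hU : U ∈ 𝓝 (1 : Ω)) :
    ∃ m : ℕ, 0 < m ∧ ((Subgroup.zpowers (a ^ m)).topologicalClosure : Set Ω) ⊆ U := by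
  obtain ⟨W, ⟨h1W, hWclopen⟩, hWU⟩ := (nhds_basis_clopen (1 : Ω)).mem_iff.mp hU
  obtain ⟨H, hH⟩ :=
    IsTopologicalGroup.exist_openSubgroup_sub_clopen_nhds_of_one hWclopen h1W
  haveI : Subgroup.FiniteIndex H.toSubgroup := H.toSubgroup.finiteIndex_of_finite_quotient
  refine ⟨H.toSubgroup.index, Nat.pos_of_ne_zero Subgroup.FiniteIndex.index_ne_zero, ?_⟩
  have ham : a ^ H.toSubgroup.index ∈ H.toSubgroup := by
    rw [← QuotientGroup.eq_one_iff (N := H.toSubgroup), QuotientGroup.mk_pow]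
    exact pow_card_eq_one'
  have hle : (Subgroup.zpowers (a ^ H.toSubgroup.index)).topologicalClosure ≤ H.toSubgroup :=
    Subgroup.topologicalClosure_minimal _ (Subgroup.zpowers_le.mpr ham) H.isClosed
  exact fun x hx => hWU (hH (hle hx))

lemma firstCountable_of_min {a : Ω} (hmin : IsMinimalTranslation a) :
    FirstCountableTopology Ω := by
  have hb : (𝓝 (1 : Ω)).HasBasis (fun m : ℕ => 0 < m)
      (fun m => ((Subgroup.zpowers (a ^ m)).topologicalClosure : Set Ω)) := by
    constructor
    intro U
    constructor
    · intro hU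
      obtain ⟨m, hm, hsub⟩ := exists_closure_zpowers_subset (a := a) hU
      exact ⟨m, hm, hsub⟩
    · rintro ⟨m, hm, hsub⟩
      exact Filter.mem_of_superset
        ((isOpen_closure_zpowers hmin hm).mem_nhds (Subgroup.one_mem _)) hsub
  constructor
  intro x
  have : 𝓝 x = Filter.map (fun y => x * y) (𝓝 (1 : Ω)) := (map_mul_left_nhds_one x).symm
  rw [this]
  haveI : (𝓝 (1 : Ω)).IsCountablyGenerated := hb.isCountablyGenerated
  exact Filter.map.isCountablyGenerated _ _


lemma exists_sep_fun {a : Ω} (hmin : IsMinimalTranslation a) (N : Subgroup Ω)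
    (hNc : IsClosed (N : Set Ω)) :
    ∃ g : C(Ω ⧸ N, ℝ), g 1 = 0 ∧ ∀ x, g x = 0 → x = 1 := by
  haveI : FirstCountableTopology Ω := firstCountable_of_min hmin
  haveI : IsClosed (N : Set Ω) := hNc
  have hmetr : TopologicalSpace.MetrizableSpace (Ω ⧸ N) := by
    letI : UniformSpace (Ω ⧸ N) := IsTopologicalGroup.rightUniformSpace _
    haveI : IsUniformGroup (Ω ⧸ N) := isUniformGroup_of_commGroup
    haveI : (𝓤 (Ω ⧸ N)).IsCountablyGenerated :=
      IsUniformGroup.uniformity_countably_generated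
    exact UniformSpace.metrizableSpace
  haveI := hmetr
  letI : MetricSpace (Ω ⧸ N) := TopologicalSpace.metrizableSpaceMetric _
  refine ⟨⟨fun x => dist x 1, continuous_id.dist continuous_const⟩, dist_self 1, ?_⟩
  intro x hx
  exact dist_eq_zero.mp hx


lemma e_mk_zpow (f : C(Ω, ℝ)) {a : Ω} (N : Subgroup Ω)
    (e : (Ω ⧸ N) ≃ₜ ↥(hull (sample f a 1)))
    (he : ∀ ω : Ω, (e (QuotientGroup.mk ω) : ℤ →ᵇ ℝ) = sample f a ω) (k : ℤ) :
    e (QuotientGroup.mk (a ^ k)) = shiftMem (sample f a 1) k := by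
  apply Subtype.ext
  show (e (QuotientGroup.mk (a ^ k)) : ℤ →ᵇ ℝ) = shiftk k (sample f a 1)
  rw [he, shiftk_sample, one_mul]

lemma canonicalMul_eq (f : C(Ω, ℝ)) {a : Ω} (hmin : IsMinimalTranslation a) (N : Subgroup Ω)
    (e : (Ω ⧸ N) ≃ₜ ↥(hull (sample f a 1)))
    (he : ∀ ω : Ω, (e (QuotientGroup.mk ω) : ℤ →ᵇ ℝ) = sample f a ω)
    {m : ↥(hull (sample f a 1)) → ↥(hull (sample f a 1)) → ↥(hull (sample f a 1))}
    (hm : CanonicalMul (sample f a 1) m) :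
    ∀ u v, m (e u) (e v) = e (u * v) := by
  have hdense : DenseRange (Prod.map (fun k : ℤ => (QuotientGroup.mk (a ^ k) : Ω ⧸ N))
      (fun k : ℤ => (QuotientGroup.mk (a ^ k) : Ω ⧸ N))) :=
    (denseRange_mk_zpow hmin N).prodMap (denseRange_mk_zpow hmin N)
  have hc1 : Continuous (fun p : (Ω ⧸ N) × (Ω ⧸ N) => m (e p.1) (e p.2)) := by
    exact hm.1.comp ((e.continuous.comp continuous_fst).prodMk
      (e.continuous.comp continuous_snd))
  have hc2 : Continuous (fun p : (Ω ⧸ N) × (Ω ⧸ N) => e (p.1 * p.2)) :=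
    e.continuous.comp continuous_mul
  have key : (fun p : (Ω ⧸ N) × (Ω ⧸ N) => m (e p.1) (e p.2)) =
      (fun p : (Ω ⧸ N) × (Ω ⧸ N) => e (p.1 * p.2)) := by
    refine Continuous.ext_on hdense hc1 hc2 ?_
    rintro p ⟨⟨k, l⟩, rfl⟩
    show m (e (QuotientGroup.mk (a ^ k))) (e (QuotientGroup.mk (a ^ l))) =
      e (QuotientGroup.mk (a ^ k) * QuotientGroup.mk (a ^ l))
    rw [e_mk_zpow f N e he, e_mk_zpow f N e he, hm.2 k l,
      ← QuotientGroup.mk_mul, ← zpow_add, e_mk_zpow f N e he]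
  intro u v
  exact congrFun key (u, v)

end St12


theorem statement_12' {Ω : Type*} [TopologicalSpace Ω] [CommGroup Ω] [IsTopologicalGroup Ω]
    [CompactSpace Ω] [TotallyDisconnectedSpace Ω]
    (a : Ω) (hmin : IsMinimalTranslation a)
    (G : Type*) [TopologicalSpace G] [Group G] [IsTopologicalGroup G] :
    (∃ f : C(Ω, ℝ), ∃ m, CanonicalMul (sample f a 1) m ∧
        ∃ h : ↥(hull (sample f a 1)) ≃ₜ G, ∀ x y, h (m x y) = h x * h y) ↔
    (∃ N : Subgroup Ω, IsClosed (N : Set Ω) ∧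
        ∃ h : (Ω ⧸ N) ≃ₜ G, ∀ x y : Ω ⧸ N, h (x * y) = h x * h y) := by
  constructor
  · rintro ⟨f, m, hm, h, hhom⟩
    obtain ⟨e, he⟩ := St12.exists_e f hmin (St12.stab f) rfl
    refine ⟨St12.stab f, St12.isClosed_stab f, e.trans h, fun u v => ?_⟩
    show h (e (u * v)) = h (e u) * h (e v)
    rw [← St12.canonicalMul_eq f hmin (St12.stab f) e he hm u v]
    exact hhom _ _
  · rintro ⟨N, hNc, h, hhom⟩
    obtain ⟨g, hg1, hg0⟩ := St12.exists_sep_fun hmin N hNc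
    set f : C(Ω, ℝ) := g.comp ⟨(QuotientGroup.mk : Ω → Ω ⧸ N), QuotientGroup.continuous_mk⟩
      with hf
    have hstab : St12.stab f = N := by
      ext ω
      constructor
      · intro hw
        have h1 := hw 1
        rw [mul_one] at h1
        have h2 : g (QuotientGroup.mk ω) = 0 := by
          have : f ω = f 1 := h1
          simpa [hf, QuotientGroup.mk_one, hg1] using this
        have h3 := hg0 _ h2
        rwa [← QuotientGroup.eq_one_iff]
      · intro hw x
        show g (QuotientGroup.mk (ω * x)) = g (QuotientGroup.mk x)
        rw [QuotientGroup.mk_mul,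
          show (QuotientGroup.mk ω : Ω ⧸ N) = 1 from (QuotientGroup.eq_one_iff ω).mpr hw, one_mul]
    obtain ⟨e, he⟩ := St12.exists_e f hmin N hstab
    refine ⟨f, fun x y => e (e.symm x * e.symm y), ⟨?_, ?_⟩, e.symm.trans h, fun x y => ?_⟩
    · exact e.continuous.comp ((e.symm.continuous.comp continuous_fst).mul
        (e.symm.continuous.comp continuous_snd))
    · intro k l
      show e (e.symm (shiftMem (sample f a 1) k) * e.symm (shiftMem (sample f a 1) l)) =
        shiftMem (sample f a 1) (k + l)
      have hk : e.symm (shiftMem (sample f a 1) k) = QuotientGroup.mk (a ^ k) := by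
        rw [← St12.e_mk_zpow f N e he k, Homeomorph.symm_apply_apply]
      have hl : e.symm (shiftMem (sample f a 1) l) = QuotientGroup.mk (a ^ l) := by
        rw [← St12.e_mk_zpow f N e he l, Homeomorph.symm_apply_apply]
      rw [hk, hl, ← QuotientGroup.mk_mul, ← zpow_add, St12.e_mk_zpow f N e he]
    · show h (e.symm (e (e.symm x * e.symm y))) = h (e.symm x) * h (e.symm y)
      rw [Homeomorph.symm_apply_apply]
      exact hhom _ _


/-- For a Cantor group `Ω` with a minimal translation (by `a`), a topological
group `G` is isomorphic (as a topological group) to `hull (F(e))` for some `f ∈ C(Ω,ℝ)` iff `G`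
is isomorphic to a quotient of `Ω` by a closed subgroup. -/
theorem statement_12 {Ω : Type*} [TopologicalSpace Ω] [CommGroup Ω] [IsTopologicalGroup Ω]
    [CompactSpace Ω] [TotallyDisconnectedSpace Ω] (hni : NoIsolatedPoints Ω)
    (a : Ω) (hmin : IsMinimalTranslation a)
    (G : Type*) [TopologicalSpace G] [Group G] [IsTopologicalGroup G] :
    (∃ f : C(Ω, ℝ), ∃ m, CanonicalMul (sample f a 1) m ∧
        ∃ h : ↥(hull (sample f a 1)) ≃ₜ G, ∀ x y, h (m x y) = h x * h y) ↔
    (∃ N : Subgroup Ω, IsClosed (N : Set Ω) ∧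
        ∃ h : (Ω ⧸ N) ≃ₜ G, ∀ x y : Ω ⧸ N, h (x * y) = h x * h y) := by
  exact statement_12' a hmin G
end

section
/- Let Ω be a Cantor group with a minimal translation T and identity element e. For every limit-periodic potential d ∈ ℓ∞(ℤ) such that hull(d) is isomorphic to Ω as a topological group, there exists f ∈ C(Ω,ℝ) with f(Tⁿ(e)) = d_n for every n ∈ ℤ. -/
open BoundedContinuousFunction Filter

section AuxStatement13

variable {G : Type*} [CommGroup G] [TopologicalSpace G] [IsTopologicalGroup G] [CompactSpace G]

private lemma aux13_pow_mem_iff (a : G) (hda : DenseRange fun k : ℤ => a ^ k)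
    (V : OpenSubgroup G) (k : ℤ) :
    a ^ k ∈ V ↔ (Nat.card (G ⧸ V.toSubgroup) : ℤ) ∣ k := by
  have hsurj : ∀ q : G ⧸ V.toSubgroup,
      q ∈ Subgroup.zpowers ((QuotientGroup.mk a : G ⧸ V.toSubgroup)) := by
    intro q
    obtain ⟨x, rfl⟩ := QuotientGroup.mk_surjective q
    have hopen : IsOpen {y : G | x⁻¹ * y ∈ V.toSubgroup} :=
      V.isOpen.preimage (continuous_const.mul continuous_id)
    obtain ⟨l, hl⟩ := hda.exists_mem_open hopen ⟨x, show x⁻¹ * x ∈ V.toSubgroup by rw [inv_mul_cancel]; exact V.toSubgroup.one_mem⟩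
    rw [Subgroup.mem_zpowers_iff]
    exact ⟨l, by rw [← QuotientGroup.mk_zpow]; exact (QuotientGroup.eq.mpr hl).symm⟩
  have hord : orderOf ((QuotientGroup.mk a : G ⧸ V.toSubgroup)) = Nat.card (G ⧸ V.toSubgroup) :=
    orderOf_eq_card_of_forall_mem_zpowers hsurj
  rw [← hord, orderOf_dvd_iff_zpow_eq_one, ← QuotientGroup.mk_zpow, QuotientGroup.eq_one_iff]
  rfl

private lemma aux13_mem_iff_mem (a b : G) (hda : DenseRange fun k : ℤ => a ^ k)
    (hdb : DenseRange fun k : ℤ => b ^ k) (V : OpenSubgroup G) (k : ℤ) :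
    a ^ k ∈ V ↔ b ^ k ∈ V := by
  rw [aux13_pow_mem_iff a hda V k, ← aux13_pow_mem_iff b hdb V k]

private lemma aux13_exists_openSubgroup_not_mem [T2Space G] [TotallyDisconnectedSpace G]
    {y : G} (hy : y ≠ 1) : ∃ V : OpenSubgroup G, y ∉ V := by
  have hcc : connectedComponent (1 : G) = {1} :=
    totallyDisconnectedSpace_iff_connectedComponent_singleton.mp ‹_› 1
  have hyn : y ∉ connectedComponent (1 : G) := by rw [hcc]; simpa using hy
  rw [connectedComponent_eq_iInter_isClopen] at hyn
  simp only [Set.mem_iInter, not_forall] at hyn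
  obtain ⟨⟨Z, hZclopen, h1Z⟩, hyZ⟩ := hyn
  obtain ⟨V, hV⟩ := IsTopologicalGroup.exist_openSubgroup_sub_clopen_nhds_of_one hZclopen h1Z
  exact ⟨V, fun hmem => hyZ (hV hmem)⟩

end AuxStatement13

variable {Ω : Type*} [TopologicalSpace Ω] [CommGroup Ω] [IsTopologicalGroup Ω] [CompactSpace Ω]
  [TotallyDisconnectedSpace Ω]

/-- If `Ω` is a Cantor group with minimal translation `T` (by `a`) and
`d ∈ ℓ∞(ℤ)` is limit-periodic with `hull d` isomorphic to `Ω` as a topological group, then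
there is `f ∈ C(Ω,ℝ)` with `f(Tⁿ(e)) = d_n` (i.e. `f(aⁿ) = d n`) for every `n ∈ ℤ`. -/
theorem statement_13 {Ω : Type*} [TopologicalSpace Ω] [CommGroup Ω] [IsTopologicalGroup Ω]
    [CompactSpace Ω] [TotallyDisconnectedSpace Ω] (hni : NoIsolatedPoints Ω)
    (a : Ω) (hmin : IsMinimalTranslation a)
    (d : ℤ →ᵇ ℝ) (hd : IsLimitPeriodic d)
    (hiso : ∃ m, CanonicalMul d m ∧
      ∃ h : ↥(hull d) ≃ₜ Ω, ∀ x y, h (m x y) = h x * h y) :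
    ∃ f : C(Ω, ℝ), ∀ n : ℤ, f (a ^ n) = d n := by
  obtain ⟨m, ⟨hmc, hms⟩, h, hhom⟩ := hiso
  haveI : T2Space Ω := h.symm.isEmbedding.t2Space
  set b : Ω := h (shiftMem d 1) with hbdef
  -- h sends shifts to powers of b
  have h0 : h (shiftMem d 0) = 1 := by
    have h1 := hhom (shiftMem d 0) (shiftMem d 0)
    rw [hms 0 0] at h1
    norm_num at h1
    exact h1
  have hadd : ∀ k l : ℤ, h (shiftMem d (k + l)) = h (shiftMem d k) * h (shiftMem d l) := by
    intro k l; rw [← hms k l]; exact hhom _ _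
  have hb : ∀ k : ℤ, h (shiftMem d k) = b ^ k := by
    intro k
    induction k using Int.induction_on with
    | zero => simpa using h0
    | succ n ih => rw [show ((n : ℤ) + 1) = (n : ℤ) + 1 from rfl, hadd, ih, ← hbdef, zpow_add_one]
    | pred n ih =>
        have h2 := hadd (-(n : ℤ) - 1) 1
        rw [sub_add_cancel, ih, ← hbdef] at h2
        have h3 : h (shiftMem d (-(n : ℤ) - 1)) = b ^ (-(n : ℤ)) * b⁻¹ :=
          eq_mul_inv_of_mul_eq h2.symm
        rw [h3, ← zpow_sub_one]
  -- dense ranges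
  have hds : DenseRange (shiftMem d) := by
    rw [Metric.denseRange_iff]
    intro x ε hε
    have hx : (x : ℤ →ᵇ ℝ) ∈ closure (orb d) := x.2
    rw [Metric.mem_closure_iff] at hx
    obtain ⟨y, ⟨k, rfl⟩, hy⟩ := hx ε hε
    exact ⟨k, by rwa [Subtype.dist_eq]⟩
  have hdb : DenseRange (fun k : ℤ => b ^ k) := by
    have hcomp : DenseRange (⇑h ∘ shiftMem d) :=
      DenseRange.comp h.surjective.denseRange hds h.continuous
    have : (⇑h ∘ shiftMem d) = fun k : ℤ => b ^ k := funext fun k => hb k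
    rwa [this] at hcomp
  have hda : DenseRange (fun k : ℤ => a ^ k) := by
    have := hmin 1
    simpa [DenseRange, one_mul] using this
  -- the graph subgroup
  set Γ : Subgroup (Ω × Ω) := (Subgroup.zpowers ((a, b) : Ω × Ω)).topologicalClosure with hΓdef
  have hpow : ∀ k : ℤ, ((a, b) : Ω × Ω) ^ k = (a ^ k, b ^ k) := fun k => rfl
  have hmemΓ : ∀ k : ℤ, ((a ^ k, b ^ k) : Ω × Ω) ∈ Γ := by
    intro k
    exact Subgroup.le_topologicalClosure _ (by rw [← hpow k]; exact ⟨k, rfl⟩)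
  have hΓ1 : ∀ y : Ω, ((1 : Ω), y) ∈ Γ → y = 1 := by
    intro y hyΓ
    by_contra hy
    obtain ⟨V, hyV⟩ := aux13_exists_openSubgroup_not_mem (G := Ω) hy
    have hopen : IsOpen ((V : Set Ω) ×ˢ {z : Ω | y⁻¹ * z ∈ V.toSubgroup}) :=
      V.isOpen.prod (V.isOpen.preimage (continuous_const.mul continuous_id))
    have hmemnbhd : ((1 : Ω), y) ∈ (V : Set Ω) ×ˢ {z : Ω | y⁻¹ * z ∈ V.toSubgroup} :=
      ⟨V.toSubgroup.one_mem, by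
        show y⁻¹ * y ∈ V.toSubgroup
        rw [inv_mul_cancel]; exact V.toSubgroup.one_mem⟩
    have hcl : ((1 : Ω), y) ∈ closure (Subgroup.zpowers ((a, b) : Ω × Ω) : Set (Ω × Ω)) := hyΓ
    rw [mem_closure_iff] at hcl
    obtain ⟨z, hz1, hz2⟩ := hcl _ hopen hmemnbhd
    obtain ⟨k, rfl⟩ := hz2
    have hak : a ^ k ∈ V := hz1.1
    have hbk : b ^ k ∈ V := (aux13_mem_iff_mem a b hda hdb V k).mp hak
    have hyb : y⁻¹ * b ^ k ∈ V.toSubgroup := hz1.2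
    have hyV' : y ∈ V.toSubgroup := by
      have hmul := V.toSubgroup.mul_mem hbk (V.toSubgroup.inv_mem hyb)
      have heq : b ^ k * (y⁻¹ * b ^ k)⁻¹ = y := by group
      rwa [heq] at hmul
    exact hyV hyV'
  -- projection is a continuous bijection
  have hΓclosed : IsClosed (Γ : Set (Ω × Ω)) := Subgroup.isClosed_topologicalClosure _
  haveI : CompactSpace ↥Γ := isCompact_iff_compactSpace.mp hΓclosed.isCompact
  let p1 : ↥Γ → Ω := fun γ => (γ : Ω × Ω).1
  have hp1c : Continuous p1 := continuous_fst.comp continuous_subtype_val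
  have hp1inj : Function.Injective p1 := by
    intro γ1 γ2 hgg
    have hmem : ((1 : Ω), (γ1 : Ω × Ω).2 * ((γ2 : Ω × Ω).2)⁻¹) ∈ Γ := by
      have hmm := Γ.mul_mem γ1.2 (Γ.inv_mem γ2.2)
      have heq : (γ1 : Ω × Ω) * (γ2 : Ω × Ω)⁻¹
          = ((1 : Ω), (γ1 : Ω × Ω).2 * ((γ2 : Ω × Ω).2)⁻¹) := by
        have h1 : (γ1 : Ω × Ω).1 = (γ2 : Ω × Ω).1 := hgg
        ext
        · show (γ1 : Ω × Ω).1 * ((γ2 : Ω × Ω).1)⁻¹ = 1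
          rw [h1, mul_inv_cancel]
        · rfl
      rwa [heq] at hmm
    have h2 := hΓ1 _ hmem
    have h3 : (γ1 : Ω × Ω).2 = (γ2 : Ω × Ω).2 := by
      rwa [mul_inv_eq_one] at h2
    exact Subtype.ext (Prod.ext hgg h3)
  have hp1surj : Function.Surjective p1 := by
    intro x
    have hclosed : IsClosed (Set.range p1) := (isCompact_range hp1c).isClosed
    have hsub : Set.range (fun k : ℤ => a ^ k) ⊆ Set.range p1 := by
      rintro _ ⟨k, rfl⟩; exact ⟨⟨(a ^ k, b ^ k), hmemΓ k⟩, rfl⟩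
    have hx : x ∈ closure (Set.range fun k : ℤ => a ^ k) := hda x
    have := closure_mono hsub hx
    rwa [hclosed.closure_eq] at this
  let e : ↥Γ ≃ Ω := Equiv.ofBijective p1 ⟨hp1inj, hp1surj⟩
  have hec : Continuous ⇑e := hp1c
  let he : ↥Γ ≃ₜ Ω := Continuous.homeoOfEquivCompactToT2 (f := e) hec
  let θ : Ω → Ω := fun ω => ((he.symm ω : Ω × Ω)).2
  have hθc : Continuous θ :=
    continuous_snd.comp (continuous_subtype_val.comp he.symm.continuous)
  have hθ : ∀ k : ℤ, θ (a ^ k) = b ^ k := by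
    intro k
    have hsymm : he.symm (a ^ k) = ⟨(a ^ k, b ^ k), hmemΓ k⟩ := by
      apply hp1inj
      have h1 : p1 (he.symm (a ^ k)) = he (he.symm (a ^ k)) := rfl
      rw [h1, Homeomorph.apply_symm_apply]
    show ((he.symm (a ^ k) : Ω × Ω)).2 = b ^ k
    rw [hsymm]
  refine ⟨⟨fun ω => ((h.symm (θ ω) : ↥(hull d)) : ℤ →ᵇ ℝ) 0, ?_⟩, ?_⟩
  · exact (continuous_eval_const (F := ℤ →ᵇ ℝ) (0 : ℤ)).comp
      (continuous_subtype_val.comp (h.symm.continuous.comp hθc))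
  · intro n
    show ((h.symm (θ (a ^ n)) : ↥(hull d)) : ℤ →ᵇ ℝ) 0 = d n
    rw [hθ n, ← hb n, Homeomorph.symm_apply_apply]
    show (shiftk n d) 0 = d n
    simp [shiftk]
end

section
/- With the notation below: (1) for every closed subgroup N of B̄, the quotient B̄/N is a procyclic group isomorphic to an inverse limit of cyclic groups ℤ_{m_k} where m_k | n_k and m_k | m_{k+1} for all k; (2) conversely, for every sequence (m_k) of positive integers with m_k | n_k and m_k | m_{k+1} for all k, the inverse limit of the cyclic groups ℤ_{m_k} (with the natural projection maps) is isomorphic as a topological group to a quotient of B̄ by a closed subgroup. -/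
/-- Each cyclic group `ZMod n` carries the discrete topology. -/
instance zmodTopologicalSpace (n : ℕ) : TopologicalSpace (ZMod n) := ⊥

instance zmodDiscreteTopology (n : ℕ) : DiscreteTopology (ZMod n) := ⟨rfl⟩

instance zmodTopologicalAddGroup (n : ℕ) : IsTopologicalAddGroup (ZMod n) where
  continuous_add := continuous_of_discreteTopology
  continuous_neg := continuous_of_discreteTopology

/-- The constant sequence `kE = (k, k, k, …)` in `A = ∏_j ℤ_{n_j}`. -/
def Ebar (n : ℕ → ℕ) (k : ℤ) : ∀ j : ℕ, ZMod (n j) := fun j => (k : ZMod (n j))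

/-- `B̄`, the closure in `A = ∏_j ℤ_{n_j}` of the cyclic subgroup `{nE : n ∈ ℤ}`. -/
noncomputable def Bbar (n : ℕ → ℕ) : Set (∀ j : ℕ, ZMod (n j)) :=
  closure (Set.range fun k : ℤ => Ebar n k)

/-- `B̄` as a closed additive subgroup of `A = ∏_k ℤ_{n_k}`: the topological closure of the
cyclic subgroup generated by `E = (1,1,1,…)`. -/
noncomputable def Bsub (n : ℕ → ℕ) : AddSubgroup (∀ k : ℕ, ZMod (n k)) :=
  (AddSubgroup.zmultiples (fun k => (1 : ZMod (n k)))).topologicalClosure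

/-- The inverse limit of the cyclic groups `ℤ_{m_k}` (along the natural projections coming from
`m_k ∣ m_{k+1}`), realized as the closed subgroup of `∏_k ℤ_{m_k}` of compatible sequences. -/
def invLim (m : ℕ → ℕ) (hm : ∀ k, m k ∣ m (k + 1)) : AddSubgroup (∀ k : ℕ, ZMod (m k)) where
  carrier := {x | ∀ k, ZMod.castHom (hm k) (ZMod (m k)) (x (k + 1)) = x k}
  add_mem' := by
    intro a b ha hb k
    simp only [Pi.add_apply, map_add, ha k, hb k]
  zero_mem' := by
    intro k
    simp
  neg_mem' := by
    intro a ha k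
    simp only [Pi.neg_apply, map_neg, ha k]

/- ### Auxiliary lemmas -/

lemma dvdChain {m : ℕ → ℕ} (hm : ∀ k, m k ∣ m (k + 1)) {k K : ℕ} (h : k ≤ K) :
    m k ∣ m K := by
  induction K with
  | zero => simp_all
  | succ K ih =>
    rcases Nat.lt_succ_iff_lt_or_eq.mp (Nat.lt_succ_of_le h) with h' | rfl
    · exact (ih (Nat.lt_succ_iff.mp h')).trans (hm K)
    · rfl

lemma castChain {m : ℕ → ℕ} (hm : ∀ k, m k ∣ m (k + 1)) (c : ∀ k, ZMod (m k))
    (hc : ∀ k, ZMod.castHom (hm k) (ZMod (m k)) (c (k + 1)) = c k) :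
    ∀ K k (h : k ≤ K), ZMod.castHom (dvdChain hm h) (ZMod (m k)) (c K) = c k := by
  intro K
  induction K with
  | zero => intro k h; interval_cases k; simp
  | succ K ih =>
    intro k h
    rcases Nat.lt_succ_iff_lt_or_eq.mp (Nat.lt_succ_of_le h) with h' | rfl
    · have hk : k ≤ K := Nat.lt_succ_iff.mp h'
      have := congrArg (fun f => f (c (K+1)))
        (ZMod.castHom_comp (dvdChain hm hk) (hm K))
      simp only [RingHom.comp_apply] at this ⊢
      rw [show (ZMod.castHom (dvdChain hm h) (ZMod (m k)))
          = ZMod.castHom ((dvdChain hm hk).trans (hm K)) (ZMod (m k)) from by congr 1]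
      rw [← this, hc K, ih k hk]
    · simp

lemma natCastChain {m : ℕ → ℕ} (hmpos : ∀ k, 0 < m k) (hm : ∀ k, m k ∣ m (k + 1))
    (c : ∀ k, ZMod (m k))
    (hc : ∀ k, ZMod.castHom (hm k) (ZMod (m k)) (c (k + 1)) = c k)
    {k K : ℕ} (h : k ≤ K) : (((c K).val : ℕ) : ZMod (m k)) = c k := by
  haveI : NeZero (m K) := ⟨(hmpos K).ne'⟩
  rw [ZMod.natCast_val, ← ZMod.castHom_apply (h := dvdChain hm h), castChain hm c hc K k h]

lemma coordEq {m : ℕ → ℕ} (hm : ∀ k, m k ∣ m (k + 1)) (u v : ∀ k, ZMod (m k))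
    (hu : ∀ k, ZMod.castHom (hm k) (ZMod (m k)) (u (k + 1)) = u k)
    (hv : ∀ k, ZMod.castHom (hm k) (ZMod (m k)) (v (k + 1)) = v k)
    {j K : ℕ} (h : j ≤ K) (he : u K = v K) : u j = v j := by
  rw [← castChain hm u hu K j h, ← castChain hm v hv K j h, he]

lemma invLim_isClosed (m : ℕ → ℕ) (hm : ∀ k, m k ∣ m (k + 1)) :
    IsClosed {x : ∀ k : ℕ, ZMod (m k) | ∀ k, ZMod.castHom (hm k) (ZMod (m k)) (x (k + 1)) = x k} := by
  have : {x : ∀ k : ℕ, ZMod (m k) | ∀ k, ZMod.castHom (hm k) (ZMod (m k)) (x (k + 1)) = x k}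
      = ⋂ k, {x | ZMod.castHom (hm k) (ZMod (m k)) (x (k + 1)) = x k} := by
    ext x; simp [Set.mem_iInter]
  rw [this]
  refine isClosed_iInter fun k => ?_
  have h1 : Continuous fun x : ∀ k : ℕ, ZMod (m k) =>
      ZMod.castHom (hm k) (ZMod (m k)) (x (k + 1)) :=
    continuous_of_discreteTopology.comp (continuous_apply (k + 1))
  exact isClosed_eq h1 (continuous_apply k)

lemma Bsub_eq_invLim (n : ℕ → ℕ) (hpos : ∀ k, 0 < n k) (hdvd : ∀ k, n k ∣ n (k + 1)) :
    Bsub n = invLim n hdvd := by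
  apply le_antisymm
  · apply AddSubgroup.topologicalClosure_minimal
    · intro x hx
      obtain ⟨j, rfl⟩ := AddSubgroup.mem_zmultiples_iff.mp hx
      intro k
      simp [map_zsmul]
    · exact invLim_isClosed n hdvd
  · intro x hx
    have key : ∀ K k, k ≤ K → (((x K).val : ℕ) : ZMod (n k)) = x k :=
      fun K k h => natCastChain hpos hdvd x hx h
    have : Filter.Tendsto (fun K : ℕ => ((x K).val : ℤ) • (fun k => (1 : ZMod (n k))))
        Filter.atTop (nhds x) := by
      rw [tendsto_pi_nhds]
      intro k
      apply Filter.Tendsto.congr' (f₁ := fun _ => x k)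
      · filter_upwards [Filter.eventually_ge_atTop k] with K hK
        simp only [Pi.smul_apply, smul_eq_mul, zsmul_eq_mul, mul_one]
        rw [Int.cast_natCast, key K k hK]
      · exact tendsto_const_nhds
    show x ∈ closure ((AddSubgroup.zmultiples (fun k => (1 : ZMod (n k)))) : Set _)
    refine mem_closure_of_tendsto this ?_
    filter_upwards with K
    exact AddSubgroup.zsmul_mem_zmultiples _ _

lemma lift_surj (n : ℕ → ℕ) (hpos : ∀ k, 0 < n k) (hdvd : ∀ k, n k ∣ n (k + 1))
    (m : ℕ → ℕ) (hmpos : ∀ k, 0 < m k) (hmn : ∀ k, m k ∣ n k) (hm : ∀ k, m k ∣ m (k + 1))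
    (c : ∀ k, ZMod (m k)) (hc : ∀ k, ZMod.castHom (hm k) (ZMod (m k)) (c (k + 1)) = c k) :
    ∃ x : ∀ k, ZMod (n k), (∀ k, ZMod.castHom (hdvd k) (ZMod (n k)) (x (k + 1)) = x k) ∧
      ∀ k, ZMod.castHom (hmn k) (ZMod (m k)) (x k) = c k := by
  haveI : ∀ k, NeZero (n k) := fun k => ⟨(hpos k).ne'⟩
  haveI : ∀ k, Finite (ZMod (n k)) := fun k => Finite.of_fintype _
  set S : ℕ → Set (∀ k, ZMod (n k)) := fun K =>
    {x | (∀ k < K, ZMod.castHom (hdvd k) (ZMod (n k)) (x (k + 1)) = x k) ∧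
      ∀ k ≤ K, ZMod.castHom (hmn k) (ZMod (m k)) (x k) = c k} with hS
  have hclosed : ∀ K, IsClosed (S K) := by
    intro K
    have : S K = (⋂ k, ⋂ _ : k < K, {x : ∀ k, ZMod (n k) |
          ZMod.castHom (hdvd k) (ZMod (n k)) (x (k + 1)) = x k}) ∩
        ⋂ k, ⋂ _ : k ≤ K, {x : ∀ k, ZMod (n k) |
          ZMod.castHom (hmn k) (ZMod (m k)) (x k) = c k} := by
      ext x; simp [hS, Set.mem_iInter]
    rw [this]
    refine IsClosed.inter (isClosed_iInter fun k => isClosed_iInter fun _ => ?_)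
      (isClosed_iInter fun k => isClosed_iInter fun _ => ?_)
    · exact isClosed_eq (continuous_of_discreteTopology.comp (continuous_apply (k+1)))
        (continuous_apply k)
    · exact isClosed_eq (continuous_of_discreteTopology.comp (continuous_apply k))
        continuous_const
  have hne : ∀ K, (S K).Nonempty := by
    intro K
    refine ⟨fun k => (((c K).val : ℕ) : ZMod (n k)), fun k _ => by simp [map_natCast], ?_⟩
    intro k hk
    rw [map_natCast]
    exact natCastChain hmpos hm c hc hk
  have hmono : ∀ K, S (K + 1) ⊆ S K := by
    intro K x hx
    exact ⟨fun k hk => hx.1 k (hk.trans (Nat.lt_succ_self K)),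
      fun k hk => hx.2 k (hk.trans (Nat.le_succ K))⟩
  have hint : (⋂ K, S K).Nonempty :=
    IsCompact.nonempty_iInter_of_sequence_nonempty_isCompact_isClosed S hmono hne
      ((hclosed 0).isCompact) hclosed
  obtain ⟨x, hx⟩ := hint
  simp only [Set.mem_iInter, hS, Set.mem_setOf_eq] at hx
  exact ⟨x, fun k => (hx (k+1)).1 k (Nat.lt_succ_self k), fun k => (hx k).2 k le_rfl⟩

lemma Bsub_compat (n : ℕ → ℕ) (hpos : ∀ k, 0 < n k) (hdvd : ∀ k, n k ∣ n (k + 1))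
    (x : ↥(Bsub n)) (k : ℕ) :
    ZMod.castHom (hdvd k) (ZMod (n k)) ((x : ∀ k, ZMod (n k)) (k + 1))
      = (x : ∀ k, ZMod (n k)) k := by
  have : (x : ∀ k, ZMod (n k)) ∈ invLim n hdvd := by
    rw [← Bsub_eq_invLim n hpos hdvd]; exact x.2
  exact this k

lemma master (n : ℕ → ℕ) (hpos : ∀ k, 0 < n k) (hdvd : ∀ k, n k ∣ n (k + 1))
    (m : ℕ → ℕ) (hmpos : ∀ k, 0 < m k) (hmn : ∀ k, m k ∣ n k) (hm : ∀ k, m k ∣ m (k + 1)) :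
    ∃ (Φ : ↥(Bsub n) →+ ↥(invLim m hm))
      (e : (↥(Bsub n) ⧸ Φ.ker) ≃ₜ ↥(invLim m hm)),
      (∀ x : ↥(Bsub n), ((Φ x : ∀ k, ZMod (m k))) =
        fun k => ZMod.castHom (hmn k) (ZMod (m k)) ((x : ∀ k, ZMod (n k)) k)) ∧
      (∀ x y, e (x + y) = e x + e y) ∧
      IsClosed ((Φ.ker : AddSubgroup ↥(Bsub n)) : Set ↥(Bsub n)) := by
  haveI : ∀ k, NeZero (n k) := fun k => ⟨(hpos k).ne'⟩
  haveI : ∀ k, Finite (ZMod (n k)) := fun k => Finite.of_fintype _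
  have hmem := Bsub_compat n hpos hdvd
  have hcompat : ∀ x : ↥(Bsub n),
      (fun k => ZMod.castHom (hmn k) (ZMod (m k)) ((x : ∀ k, ZMod (n k)) k)) ∈ invLim m hm := by
    intro x k
    show ZMod.castHom (hm k) (ZMod (m k)) (ZMod.castHom (hmn (k+1)) (ZMod (m (k+1)))
        ((x : ∀ k, ZMod (n k)) (k+1)))
      = ZMod.castHom (hmn k) (ZMod (m k)) ((x : ∀ k, ZMod (n k)) k)
    have h1 := congrArg (fun f => f ((x : ∀ k, ZMod (n k)) (k+1)))
      (ZMod.castHom_comp (hm k) (hmn (k+1)))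
    have h2 := congrArg (fun f => f ((x : ∀ k, ZMod (n k)) (k+1)))
      (ZMod.castHom_comp (hmn k) (hdvd k))
    simp only [RingHom.comp_apply] at h1 h2
    rw [h1, ← hmem x k, h2]
  set Φ : ↥(Bsub n) →+ ↥(invLim m hm) :=
    { toFun := fun x => ⟨fun k => ZMod.castHom (hmn k) (ZMod (m k))
        ((x : ∀ k, ZMod (n k)) k), hcompat x⟩
      map_zero' := by ext k; simp
      map_add' := by
        intro a b
        ext k
        exact map_add (ZMod.castHom (hmn k) (ZMod (m k))) _ _ } with hΦ
  have hΦapp : ∀ x : ↥(Bsub n), ((Φ x : ∀ k, ZMod (m k))) =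
      fun k => ZMod.castHom (hmn k) (ZMod (m k)) ((x : ∀ k, ZMod (n k)) k) := fun x => rfl
  have hcont : Continuous Φ := by
    apply Continuous.subtype_mk
    apply continuous_pi
    intro k
    exact continuous_of_discreteTopology.comp ((continuous_apply k).comp continuous_subtype_val)
  have hsurj : Function.Surjective Φ := by
    intro c
    obtain ⟨x, hx1, hx2⟩ := lift_surj n hpos hdvd m hmpos hmn hm (c : ∀ k, ZMod (m k)) c.2
    refine ⟨⟨x, ?_⟩, ?_⟩
    · rw [Bsub_eq_invLim n hpos hdvd]; exact hx1
    · ext k; exact hx2 k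
  haveI : CompactSpace ↥(Bsub n) := by
    exact isCompact_iff_compactSpace.mp
      ((AddSubgroup.isClosed_topologicalClosure _).isCompact)
  set Q := QuotientAddGroup.quotientKerEquivOfSurjective Φ hsurj with hQ
  have hQmk : ∀ x : ↥(Bsub n), Q (QuotientAddGroup.mk x) = Φ x := by
    intro x
    exact QuotientAddGroup.kerLift_mk Φ x
  have hQcont : Continuous Q := by
    rw [(QuotientAddGroup.isQuotientMap_mk Φ.ker).continuous_iff]
    exact hcont.congr (fun x => (hQmk x).symm)
  refine ⟨Φ, Continuous.homeoOfEquivCompactToT2 (f := Q.toEquiv) hQcont, hΦapp, ?_, ?_⟩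
  · intro x y
    exact map_add Q x y
  · have : ((Φ.ker : AddSubgroup ↥(Bsub n)) : Set ↥(Bsub n)) = ⇑Φ ⁻¹' {0} := by
      ext x
      simp [AddMonoidHom.mem_ker]
    rw [this]
    exact IsClosed.preimage hcont isClosed_singleton

/-- (1) Every quotient of `B̄` by a closed subgroup is a procyclic group,
isomorphic (as a topological group) to an inverse limit of cyclic groups `ℤ_{m_k}` with
`m_k ∣ n_k` and `m_k ∣ m_{k+1}`; (2) conversely, for every sequence `(m_k)` of positive
integers with `m_k ∣ n_k` and `m_k ∣ m_{k+1}`, the inverse limit of the `ℤ_{m_k}` is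
isomorphic as a topological group to a quotient of `B̄` by a closed subgroup. -/
theorem statement_19 (n : ℕ → ℕ) (hpos : ∀ k, 0 < n k) (hmono : StrictMono n)
    (hdvd : ∀ k, n k ∣ n (k + 1)) :
    (∀ N : AddSubgroup ↥(Bsub n), IsClosed (N : Set ↥(Bsub n)) →
      ∃ m : ℕ → ℕ, ∃ (_ : ∀ k, 0 < m k) (_ : ∀ k, m k ∣ n k) (hm : ∀ k, m k ∣ m (k + 1)),
        ∃ e : (↥(Bsub n) ⧸ N) ≃ₜ ↥(invLim m hm),
          ∀ x y : ↥(Bsub n) ⧸ N, e (x + y) = e x + e y) ∧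
    (∀ m : ℕ → ℕ, (∀ k, 0 < m k) → (∀ k, m k ∣ n k) → ∀ hm : ∀ k, m k ∣ m (k + 1),
      ∃ N : AddSubgroup ↥(Bsub n), IsClosed (N : Set ↥(Bsub n)) ∧
        ∃ e : ↥(invLim m hm) ≃ₜ (↥(Bsub n) ⧸ N),
          ∀ x y : ↥(invLim m hm), e (x + y) = e x + e y) := by
  haveI : ∀ k, NeZero (n k) := fun k => ⟨(hpos k).ne'⟩
  constructor
  · -- Part (1)
    intro N hN
    set π : ∀ k, ↥(Bsub n) →+ ZMod (n k) :=
      fun k => (Pi.evalAddMonoidHom (fun j => ZMod (n j)) k).comp (Bsub n).subtype with hπ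
    set H : ∀ k, AddSubgroup (ZMod (n k)) := fun k => N.map (π k) with hH
    set J : ∀ k, AddSubgroup ℤ :=
      fun k => (H k).comap (Int.castAddHom (ZMod (n k))) with hJ
    choose a ha using fun k => Int.subgroup_cyclic (J k)
    have hJmem : ∀ k (j : ℤ), j ∈ J k ↔ a k ∣ j := by
      intro k j
      rw [ha k, AddSubgroup.mem_closure_singleton]
      constructor
      · rintro ⟨t, rfl⟩
        exact Dvd.intro_left t rfl
      · rintro ⟨t, rfl⟩
        exact ⟨t, by rw [smul_eq_mul, mul_comm]⟩
    have hnJ : ∀ k, (n k : ℤ) ∈ J k := by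
      intro k
      show Int.castAddHom (ZMod (n k)) (n k : ℤ) ∈ H k
      have : Int.castAddHom (ZMod (n k)) (n k : ℤ) = 0 := by
        simp
      rw [this]
      exact zero_mem _
    set m : ℕ → ℕ := fun k => (a k).natAbs with hm'
    have hadvd : ∀ k, a k ∣ (n k : ℤ) := fun k => (hJmem k _).mp (hnJ k)
    have hmpos : ∀ k, 0 < m k := by
      intro k
      rw [hm']
      rw [Int.natAbs_pos]
      intro h0
      have hd := hadvd k
      rw [h0] at hd
      have : (n k : ℤ) = 0 := zero_dvd_iff.mp hd
      exact (hpos k).ne' (by exact_mod_cast this)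
    have hmn : ∀ k, m k ∣ n k := by
      intro k
      have := Int.natAbs_dvd_natAbs.mpr (hadvd k)
      simpa using this
    have hHker : ∀ k (x : ZMod (n k)), x ∈ H k ↔ ZMod.castHom (hmn k) (ZMod (m k)) x = 0 := by
      intro k x
      obtain ⟨j, rfl⟩ := ZMod.intCast_surjective x
      have h1 : ((j : ZMod (n k)) ∈ H k) ↔ j ∈ J k := by
        rw [hJ]
        simp [AddSubgroup.mem_comap]
      rw [h1, hJmem, map_intCast, ZMod.intCast_zmod_eq_zero_iff_dvd]
      constructor
      · intro h
        exact (Int.natAbs_dvd.mpr h : ((a k).natAbs : ℤ) ∣ j)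
      · intro h
        exact Int.natAbs_dvd.mp h
    have hHcast : ∀ k (x : ZMod (n (k+1))), x ∈ H (k+1) →
        ZMod.castHom (hdvd k) (ZMod (n k)) x ∈ H k := by
      intro k x hx
      obtain ⟨y, hyN, rfl⟩ := AddSubgroup.mem_map.mp hx
      have : ZMod.castHom (hdvd k) (ZMod (n k)) (π (k+1) y) = π k y :=
        Bsub_compat n hpos hdvd y k
      rw [this]
      exact AddSubgroup.mem_map.mpr ⟨y, hyN, rfl⟩
    have hm : ∀ k, m k ∣ m (k + 1) := by
      intro k
      haveI : NeZero (m k) := ⟨(hmpos k).ne'⟩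
      have h1 : ((m (k+1) : ℕ) : ZMod (n (k+1))) ∈ H (k+1) := by
        rw [hHker]
        rw [map_natCast]
        exact ZMod.natCast_self _
      have h2 := hHcast k _ h1
      rw [map_natCast] at h2
      rw [hHker] at h2
      rw [map_natCast] at h2
      exact (ZMod.natCast_eq_zero_iff _ _).mp h2
    obtain ⟨Φ, e, happ, hadd, hker⟩ := master n hpos hdvd m hmpos hmn hm
    have hNker : N = Φ.ker := by
      ext x
      simp only [AddMonoidHom.mem_ker]
      constructor
      · intro hx
        have hc : ∀ k, ZMod.castHom (hmn k) (ZMod (m k)) ((x : ∀ k, ZMod (n k)) k) = 0 := by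
          intro k
          exact (hHker k _).mp (AddSubgroup.mem_map.mpr ⟨x, hx, rfl⟩)
        apply Subtype.ext
        rw [happ x]
        funext k
        exact hc k
      · intro hx
        have hxk : ∀ k, (x : ∀ k, ZMod (n k)) k ∈ H k := by
          intro k
          rw [hHker]
          have := congrArg (fun z : ↥(invLim m hm) => (z : ∀ k, ZMod (m k)) k) hx
          rw [happ x] at this
          exact this
        have hy : ∀ K, ∃ y : ↥(Bsub n), y ∈ N ∧ (y : ∀ k, ZMod (n k)) K
            = (x : ∀ k, ZMod (n k)) K := by
          intro K
          obtain ⟨y, hyN, hyx⟩ := AddSubgroup.mem_map.mp (hxk K)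
          exact ⟨y, hyN, hyx⟩
        choose y hyN hyx using hy
        have hten : Filter.Tendsto y Filter.atTop (nhds x) := by
          rw [tendsto_subtype_rng]
          rw [tendsto_pi_nhds]
          intro j
          apply Filter.Tendsto.congr' (f₁ := fun _ => (x : ∀ k, ZMod (n k)) j)
          · filter_upwards [Filter.eventually_ge_atTop j] with K hK
            exact (coordEq hdvd _ _
              (fun k => Bsub_compat n hpos hdvd (y K) k)
              (fun k => Bsub_compat n hpos hdvd x k) hK (hyx K)).symm
          · exact tendsto_const_nhds
        have hxcl : x ∈ closure (N : Set ↥(Bsub n)) :=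
          mem_closure_of_tendsto hten (Filter.Eventually.of_forall hyN)
        rwa [hN.closure_eq] at hxcl
    refine ⟨m, hmpos, hmn, hm, ?_⟩
    rw [hNker]
    exact ⟨e, hadd⟩
  · -- Part (2)
    intro m hmpos hmn hm
    obtain ⟨Φ, e, happ, hadd, hker⟩ := master n hpos hdvd m hmpos hmn hm
    refine ⟨Φ.ker, hker, e.symm, ?_⟩
    intro x y
    apply e.toEquiv.injective
    show e _ = e _
    rw [hadd]
    simp only [Homeomorph.apply_symm_apply]
end
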